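/- arXiv:2112.07549 — 3 statements merged into one kernel-verified Lean document; each statement's English description precedes it below -/
import Mathlib

section
/- Let N be an extended stopping variable with respect to X_1, X_2, … such that P_0(N < ∞) ≤ α for some α ∈ (0,1). For k = 1, 2, …, let N_k denote the stopping variable obtained by applying N to the shifted sequence X_k, X_{k+1}, …, and define N* = min{ N_k + k − 1 : k = 1, 2, … }. Then N* is an extended stopping variable satisfying E_0(N*) ≥ 1/α and Ē1(N*) ≤ E_1(N). -/
open MeasureTheory Filter
open scoped ENNReal NNReal Topology BigOperators Classical

namespace ChangeDetect

variable {𝒳 : Type} [Fintype 𝒳] [Nonempty 𝒳] [MeasurableSpace 𝒳]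

/-- A probability mass function on `𝒳`. -/
def IsPMF (p : 𝒳 → ℝ) : Prop := (∀ a, 0 ≤ p a) ∧ ∑ a, p a = 1

/-- A probability mass function on `𝒳` with full support. -/
def IsPosPMF (p : 𝒳 → ℝ) : Prop := (∀ a, 0 < p a) ∧ ∑ a, p a = 1

/-- `L` is a family of length functions of fixed-to-variable prefix codes,
i.e. it satisfies Kraft's inequality for each block length `n`. -/
def Kraft (L : (n : ℕ) → (Fin n → 𝒳) → ℕ) : Prop :=
  ∀ n : ℕ, ∑ w : Fin n → 𝒳, (2 : ℝ) ^ (-(L n w : ℝ)) ≤ 1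

/-- i.i.d. (memoryless) probability of a word. -/
noncomputable def wp (p : 𝒳 → ℝ) {n : ℕ} (w : Fin n → 𝒳) : ℝ := ∏ i, p (w i)

/-- Strong universality of the code `L`:
`R_L^n = sup_μ max_w (L(w) + log₂ μ(w)) = o(n)`, the sup over memoryless sources. -/
def StronglyUniversal (L : (n : ℕ) → (Fin n → 𝒳) → ℕ) : Prop :=
  ∃ R : ℕ → ℝ, Tendsto (fun n => R n / n) atTop (𝓝 0) ∧
    ∀ (n : ℕ) (μ : 𝒳 → ℝ), IsPosPMF μ → ∀ w : Fin n → 𝒳,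
      (L n w : ℝ) + Real.logb 2 (wp μ w) ≤ R n

/-- Kullback–Leibler divergence in bits between two pmfs on `𝒳`. -/
noncomputable def D (p q : 𝒳 → ℝ) : ℝ := ∑ a, p a * Real.logb 2 (p a / q a)

/-- The word `x_{s+1}, …, x_{s+n}` of the sequence `x`. -/
def seg (x : ℕ → 𝒳) (s n : ℕ) : Fin n → 𝒳 := fun i => x (s + (i : ℕ))

/-- `P` is the joint law of a sequence of independent observations with `X_{i+1} ∼ ps i`
(characterized by its values on cylinder sets). -/
def IsProductLaw (ps : ℕ → 𝒳 → ℝ) (P : Measure (ℕ → 𝒳)) : Prop :=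
  IsProbabilityMeasure P ∧
    ∀ (n : ℕ) (w : Fin n → 𝒳),
      P {x | ∀ i : Fin n, x (i : ℕ) = w i} = ∏ i : Fin n, ENNReal.ofReal (ps (i : ℕ) (w i))

/-- `P` is the law of an i.i.d. sequence with marginal pmf `p`. -/
def IsIIDLaw (p : 𝒳 → ℝ) (P : Measure (ℕ → 𝒳)) : Prop := IsProductLaw (fun _ => p) P

/-- The one-sided test statistic `−L(x_{s+1}^{s+n}) − log₂ ν(x_{s+1}^{s+n}) − nλ`. -/
noncomputable def stat (L : (n : ℕ) → (Fin n → 𝒳) → ℕ) (ν : 𝒳 → ℝ) (lam : ℝ)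
    (s : ℕ) (x : ℕ → 𝒳) (n : ℕ) : ℝ :=
  -(L n (seg x s n) : ℝ) - Real.logb 2 (wp ν (seg x s n)) - n * lam

/-- The auxiliary stopping time
`N(α) = inf {n ≥ 1 : −L(x_{s+1}^{s+n}) − log₂ ν(x_{s+1}^{s+n}) − nλ ≥ −log₂ α}`
(`⊤` if the set is empty). -/
noncomputable def Naux (L : (n : ℕ) → (Fin n → 𝒳) → ℕ) (ν : 𝒳 → ℝ) (lam α : ℝ)
    (s : ℕ) (x : ℕ → 𝒳) : ℕ∞ :=
  sInf {m : ℕ∞ | ∃ n : ℕ, m = n ∧ 1 ≤ n ∧ -Real.logb 2 α ≤ stat L ν lam s x n}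

/-- The CUSUM statistic `−L(x_{s+k+1}^{s+n}) − log₂ ν(x_{s+k+1}^{s+n}) − nλ`
(here `0 ≤ k < n`, corresponding to the 1-indexed segment `x_{k+1}^{n}` after `s`
training samples). -/
noncomputable def cstat (L : (n : ℕ) → (Fin n → 𝒳) → ℕ) (ν : 𝒳 → ℝ) (lam : ℝ)
    (s : ℕ) (x : ℕ → 𝒳) (k n : ℕ) : ℝ :=
  -(L (n - k) (seg x (s + k) (n - k)) : ℝ)
    - Real.logb 2 (wp ν (seg x (s + k) (n - k))) - n * lam

/-- The CUSUM stopping time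
`M(γ) = inf {n ≥ 1 : max_{1 ≤ k ≤ n} (−L(x_k^n) − log₂ ν(x_k^n) − nλ) ≥ log₂ γ}`. -/
noncomputable def Mstop (L : (n : ℕ) → (Fin n → 𝒳) → ℕ) (ν : 𝒳 → ℝ) (lam γ : ℝ)
    (s : ℕ) (x : ℕ → 𝒳) : ℕ∞ :=
  sInf {m : ℕ∞ | ∃ n : ℕ, m = n ∧ 1 ≤ n ∧ ∃ k < n, Real.logb 2 γ ≤ cstat L ν lam s x k n}

/-- Expectation of an (extended) stopping time. -/
noncomputable def lexp (P : Measure (ℕ → 𝒳)) (N : (ℕ → 𝒳) → ℕ∞) : ℝ≥0∞ :=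
  ∫⁻ x, (N x : ℝ≥0∞) ∂P

/-- The σ-algebra generated by the first `m` coordinates. -/
def firstCoords (𝒳 : Type) [MeasurableSpace 𝒳] (m : ℕ) : MeasurableSpace (ℕ → 𝒳) :=
  MeasurableSpace.comap (fun x => (fun i : Fin m => x (i : ℕ))) inferInstance

/-- An (extended) stopping variable of the observation sequence. -/
def IsSeqStoppingTime (N : (ℕ → 𝒳) → ℕ∞) : Prop :=
  ∀ n : ℕ, MeasurableSet[firstCoords 𝒳 n] {x | N x ≤ (n : ℕ∞)}

/-- Lorden's worst-case expected delay
`Ē₁(N) = sup_{m ≥ 1} ess sup E_m[(N − m + 1)⁺ | X_1, …, X_{m−1}]`,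
where under `P_m` the first `m − 1` observations are i.i.d. with the pre-change law
(the full i.i.d. pre-change law is `P0`) and the observations from time `m` on are
i.i.d. with the post-change law (full i.i.d. law `P1`).  The conditional expectation
given `X_1, …, X_{m−1}` is realized by integrating out the coordinates from `m` on. -/
noncomputable def lordenE1 (P0 P1 : Measure (ℕ → 𝒳)) (N : (ℕ → 𝒳) → ℕ∞) : ℝ≥0∞ :=
  ⨆ m : ℕ, essSup
    (fun x => ∫⁻ y, ((N (fun i => if i < m then x i else y i) : ℝ≥0∞) - m) ∂P1) P0

/-- Empirical distribution of the first `n0` samples of the sequence `x`. -/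
noncomputable def emp (n0 : ℕ) (x : ℕ → 𝒳) (a : 𝒳) : ℝ :=
  ((Finset.range n0).filter (fun i => x i = a)).card / n0

/-- The optimal worst-case delay over all stopping times with `E₀(S) ≥ γ`
(Lorden's class `S_γ`). -/
noncomputable def minDelay (P0 P1 : Measure (ℕ → 𝒳)) (γ : ℝ) : ℝ≥0∞ :=
  sInf {r : ℝ≥0∞ | ∃ N : (ℕ → 𝒳) → ℕ∞, IsSeqStoppingTime N ∧
    ENNReal.ofReal γ ≤ lexp P0 N ∧ r = lordenE1 P0 P1 N}


section Aux
set_option linter.unusedSectionVars false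
variable {𝒳 : Type} [Fintype 𝒳] [Nonempty 𝒳] [MeasurableSpace 𝒳]

noncomputable def extw {n : ℕ} (w : Fin n → 𝒳) : ℕ → 𝒳 :=
  fun i => if h : i < n then w ⟨i, h⟩ else Classical.arbitrary 𝒳

noncomputable def PSum (μ : 𝒳 → ℝ) (n : ℕ) (p : (ℕ → 𝒳) → Prop) : ℝ :=
  ∑ w : Fin n → 𝒳, if p (extw w) then wp μ w else 0

def splitE (k m : ℕ) : ((Fin k → 𝒳) × (Fin m → 𝒳)) ≃ (Fin (k + m) → 𝒳) where
  toFun p := fun i => if h : (i : ℕ) < k then p.1 ⟨i, h⟩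
    else p.2 ⟨(i : ℕ) - k, by have := i.isLt; omega⟩
  invFun w := (fun i => w ⟨i, by have := i.isLt; omega⟩,
    fun j => w ⟨k + (j : ℕ), by have := j.isLt; omega⟩)
  left_inv p := by
    obtain ⟨u, v⟩ := p
    refine Prod.ext (funext fun i => ?_) (funext fun j => ?_)
    · simp only [dif_pos i.isLt]
    · simp only [dif_neg (by omega : ¬ k + (j : ℕ) < k)]
      congr 1
      exact Fin.ext (by simp)
  right_inv w := by
    funext i
    by_cases h : (i : ℕ) < k
    · simp only [dif_pos h]
    · simp only [dif_neg h]
      congr 1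
      exact Fin.ext (by simp; omega)

lemma splitE_shift {k m : ℕ} (u : Fin k → 𝒳) (v : Fin m → 𝒳) :
    (fun i => extw (splitE k m (u, v)) (i + k)) = extw v := by
  funext i
  simp only [extw, splitE, Equiv.coe_fn_mk]
  by_cases h : i < m
  · rw [dif_pos (by omega : i + k < k + m), dif_neg (by omega : ¬ i + k < k), dif_pos h]
    simp
  · rw [dif_neg (by omega : ¬ i + k < k + m), dif_neg h]

lemma splitE_agree {k m : ℕ} (u : Fin k → 𝒳) (v : Fin m → 𝒳) :
    ∀ i < k, extw (splitE k m (u, v)) i = extw u i := by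
  intro i hi
  simp only [extw, splitE, Equiv.coe_fn_mk]
  rw [dif_pos (by omega : i < k + m), dif_pos hi, dif_pos hi]

lemma wp_splitE (μ : 𝒳 → ℝ) {k m : ℕ} (u : Fin k → 𝒳) (v : Fin m → 𝒳) :
    wp μ (splitE k m (u, v)) = wp μ u * wp μ v := by
  rw [wp, Fin.prod_univ_add]
  congr 1
  · refine Finset.prod_congr rfl fun i _ => ?_
    have : ((Fin.castAdd m i : Fin (k + m)) : ℕ) < k := by simp [i.isLt]
    simp only [splitE, Equiv.coe_fn_mk, dif_pos this]
    simp
  · refine Finset.prod_congr rfl fun j _ => ?_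
    have : ¬ ((Fin.natAdd k j : Fin (k + m)) : ℕ) < k := by simp
    simp only [splitE, Equiv.coe_fn_mk, dif_neg this]
    simp


lemma sum_wp (μ : 𝒳 → ℝ) (h1 : ∑ a, μ a = 1) : ∀ n, ∑ w : Fin n → 𝒳, wp μ w = 1 := by
  intro n
  induction n with
  | zero =>
    rw [Fintype.sum_unique]
    simp [wp]
  | succ n ih =>
    have e := Equiv.sum_comp (splitE (𝒳 := 𝒳) n 1) (wp μ)
    rw [← e, Fintype.sum_prod_type]
    have h1' : ∑ v : Fin 1 → 𝒳, wp μ v = 1 := by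
      have e2 := Equiv.sum_comp (Equiv.funUnique (Fin 1) 𝒳).symm (wp μ)
      rw [← e2]
      simpa [wp] using h1
    calc ∑ u : Fin n → 𝒳, ∑ v : Fin 1 → 𝒳, wp μ (splitE n 1 (u, v))
        = ∑ u : Fin n → 𝒳, ∑ v : Fin 1 → 𝒳, wp μ u * wp μ v := by
          refine Finset.sum_congr rfl fun u _ => Finset.sum_congr rfl fun v _ => ?_
          exact wp_splitE μ u v
      _ = (∑ u : Fin n → 𝒳, wp μ u) * (∑ v : Fin 1 → 𝒳, wp μ v) := by
          rw [Finset.sum_mul_sum]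
      _ = 1 := by rw [ih, h1', one_mul]

end Aux
section Aux2
set_option linter.unusedSectionVars false
variable {𝒳 : Type} [Fintype 𝒳] [Nonempty 𝒳] [MeasurableSpace 𝒳]

def DetBy (n : ℕ) (p : (ℕ → 𝒳) → Prop) : Prop :=
  ∀ x y : ℕ → 𝒳, (∀ i < n, x i = y i) → p x → p y

lemma wp_nonneg {μ : 𝒳 → ℝ} (hμ : ∀ a, 0 ≤ μ a) {n} (w : Fin n → 𝒳) : 0 ≤ wp μ w :=
  Finset.prod_nonneg fun i _ => hμ _

lemma PSum_nonneg {μ : 𝒳 → ℝ} (hμ : ∀ a, 0 ≤ μ a) (n : ℕ) (p : (ℕ → 𝒳) → Prop) :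
    0 ≤ PSum μ n p :=
  Finset.sum_nonneg fun w _ => by
    by_cases h : p (extw w) <;> simp [h, wp_nonneg hμ]

lemma PSum_mono {μ : 𝒳 → ℝ} (hμ : ∀ a, 0 ≤ μ a) (n : ℕ) {p q : (ℕ → 𝒳) → Prop}
    (h : ∀ x, p x → q x) : PSum μ n p ≤ PSum μ n q := by
  refine Finset.sum_le_sum fun w _ => ?_
  by_cases hp : p (extw w)
  · rw [if_pos hp, if_pos (h _ hp)]
  · rw [if_neg hp]
    by_cases hq : q (extw w) <;> simp [hq, wp_nonneg hμ]

lemma PSum_congr {μ : 𝒳 → ℝ} (n : ℕ) {p q : (ℕ → 𝒳) → Prop}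
    (h : ∀ x, p x ↔ q x) : PSum μ n p = PSum μ n q := by
  refine Finset.sum_congr rfl fun w _ => ?_
  rw [if_congr (h _) rfl rfl]

lemma PSum_le_one {μ : 𝒳 → ℝ} (hμ : ∀ a, 0 ≤ μ a) (h1 : ∑ a, μ a = 1) (n : ℕ)
    (p : (ℕ → 𝒳) → Prop) : PSum μ n p ≤ 1 := by
  calc PSum μ n p ≤ ∑ w : Fin n → 𝒳, wp μ w := by
        refine Finset.sum_le_sum fun w _ => ?_
        by_cases hp : p (extw w) <;> simp [hp, wp_nonneg hμ]
    _ = 1 := sum_wp μ h1 n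

lemma PSum_true {μ : 𝒳 → ℝ} (h1 : ∑ a, μ a = 1) (n : ℕ) :
    PSum μ n (fun _ => True) = 1 := by
  rw [PSum]
  simp only [if_true]
  exact sum_wp μ h1 n

lemma PSum_split (μ : 𝒳 → ℝ) (k m : ℕ) (p q : (ℕ → 𝒳) → Prop) (hp : DetBy k p) :
    PSum μ (k + m) (fun x => p x ∧ q (fun i => x (i + k))) = PSum μ k p * PSum μ m q := by
  rw [PSum, ← Equiv.sum_comp (splitE (𝒳 := 𝒳) k m), Fintype.sum_prod_type,
    PSum, PSum, Finset.sum_mul_sum]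
  refine Finset.sum_congr rfl fun u _ => Finset.sum_congr rfl fun v _ => ?_
  have h1 : p (extw (splitE k m (u, v))) ↔ p (extw u) :=
    ⟨hp _ _ (fun i hi => splitE_agree u v i hi),
     hp _ _ (fun i hi => (splitE_agree u v i hi).symm)⟩
  rw [wp_splitE μ u v, splitE_shift u v]
  by_cases hpu : p (extw u) <;> by_cases hqv : q (extw v) <;>
    simp [hpu, hqv, h1]

lemma PSum_marginal (μ : 𝒳 → ℝ) (h1 : ∑ a, μ a = 1) (k m : ℕ)
    (p : (ℕ → 𝒳) → Prop) (hp : DetBy k p) : PSum μ (k + m) p = PSum μ k p := by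
  have := PSum_split μ k m p (fun _ => True) hp
  rw [PSum_congr (k + m) (q := p) (fun x => by simp)] at this
  rw [this, PSum_true h1, mul_one]

lemma PSum_split_cases (μ : 𝒳 → ℝ) (n : ℕ) (p q : (ℕ → 𝒳) → Prop) :
    PSum μ n p = PSum μ n (fun x => p x ∧ q x) + PSum μ n (fun x => p x ∧ ¬ q x) := by
  rw [PSum, PSum, PSum, ← Finset.sum_add_distrib]
  refine Finset.sum_congr rfl fun w _ => ?_
  by_cases hp : p (extw w) <;> by_cases hq : q (extw w) <;> simp [hp, hq]

lemma PSum_or_le {μ : 𝒳 → ℝ} (hμ : ∀ a, 0 ≤ μ a) (n : ℕ) (p q : (ℕ → 𝒳) → Prop) :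
    PSum μ n (fun x => p x ∨ q x) ≤ PSum μ n p + PSum μ n q := by
  rw [PSum, PSum, PSum, ← Finset.sum_add_distrib]
  refine Finset.sum_le_sum fun w _ => ?_
  have := wp_nonneg hμ (μ := μ) w
  by_cases hp : p (extw w) <;> by_cases hq : q (extw w) <;> simp [hp, hq] <;> linarith

lemma PSum_exists_le {μ : 𝒳 → ℝ} (hμ : ∀ a, 0 ≤ μ a) (n : ℕ) (K : ℕ)
    (Q : ℕ → (ℕ → 𝒳) → Prop) :
    PSum μ n (fun x => ∃ k ∈ Finset.range K, Q k x)
      ≤ ∑ k ∈ Finset.range K, PSum μ n (Q k) := by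
  induction K with
  | zero => simp [PSum]
  | succ K ih =>
    rw [Finset.sum_range_succ]
    calc PSum μ n (fun x => ∃ k ∈ Finset.range (K + 1), Q k x)
        ≤ PSum μ n (fun x => (∃ k ∈ Finset.range K, Q k x) ∨ Q K x) := by
          refine PSum_mono hμ n fun x => ?_
          rintro ⟨k, hk, hQ⟩
          rcases Finset.mem_range_succ_iff.mp hk |>.lt_or_eq with h | h
          · exact Or.inl ⟨k, Finset.mem_range.mpr h, hQ⟩
          · exact Or.inr (h ▸ hQ)
      _ ≤ PSum μ n (fun x => ∃ k ∈ Finset.range K, Q k x) + PSum μ n (Q K) :=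
          PSum_or_le hμ n _ _
      _ ≤ _ := by exact add_le_add_left ih _

end Aux2
section Aux3
set_option linter.unusedSectionVars false
variable {𝒳 : Type} [Fintype 𝒳] [Nonempty 𝒳] [MeasurableSpace 𝒳]

lemma le_ambient {n : ℕ} {A : Set (ℕ → 𝒳)} (hA : MeasurableSet[firstCoords 𝒳 n] A) :
    MeasurableSet A := by
  obtain ⟨S, hS, rfl⟩ := MeasurableSpace.measurableSet_comap.mp hA
  exact (measurable_pi_lambda _ fun i => measurable_pi_apply _) hS

lemma det_of_first {n : ℕ} {A : Set (ℕ → 𝒳)} (hA : MeasurableSet[firstCoords 𝒳 n] A) :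
    ∀ x y : ℕ → 𝒳, (∀ i < n, x i = y i) → x ∈ A → y ∈ A := by
  obtain ⟨S, -, rfl⟩ := MeasurableSpace.measurableSet_comap.mp hA
  intro x y h hx
  have hxy : (fun i : Fin n => x i) = fun i : Fin n => y i := funext fun i => h i i.isLt
  have : (fun i : Fin n => x i) ∈ S := hx
  rw [hxy] at this
  exact this

variable (N : (ℕ → 𝒳) → ℕ∞)

noncomputable def Nst (x : ℕ → 𝒳) : ℕ∞ := ⨅ k : ℕ, N (fun i => x (i + k)) + (k : ℕ∞)

def cleanTo (x : ℕ → 𝒳) (n : ℕ) : Prop := (n : ℕ∞) < Nst N x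

lemma det_le (hN : IsSeqStoppingTime N) (j : ℕ) :
    ∀ x y : ℕ → 𝒳, (∀ i < j, x i = y i) → N x ≤ j → N y ≤ j := fun x y h hx =>
  det_of_first (hN j) x y h hx

lemma Nst_le (x : ℕ → 𝒳) (k : ℕ) : Nst N x ≤ N (fun i => x (i + k)) + k := iInf_le _ k

lemma cleanTo_iff (x : ℕ → 𝒳) (n : ℕ) :
    cleanTo N x n ↔ ∀ k, k ≤ n → ((n - k : ℕ) : ℕ∞) < N (fun i => x (i + k)) := by
  constructor
  · intro h k hk
    by_contra hc
    push_neg at hc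
    have : Nst N x ≤ n := by
      refine le_trans (Nst_le N x k) ?_
      calc N (fun i => x (i + k)) + k ≤ ((n - k : ℕ) : ℕ∞) + k := add_le_add_left hc _
        _ = ((n - k + k : ℕ) : ℕ∞) := by push_cast; ring
        _ = (n : ℕ∞) := by rw [Nat.sub_add_cancel hk]
    exact absurd this (not_le.mpr h)
  · intro h
    have h1 : ((n : ℕ∞) + 1) ≤ Nst N x := by
      refine le_iInf fun k => ?_
      by_cases hk : k ≤ n
      · have := h k hk
        have h2 : ((n - k : ℕ) : ℕ∞) + 1 ≤ N (fun i => x (i + k)) :=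
          (ENat.add_one_le_iff (by simp)).mpr this
        calc (n : ℕ∞) + 1 = (((n - k : ℕ) : ℕ∞) + 1) + (k : ℕ∞) := by
              rw [← Nat.cast_one, ← Nat.cast_add, ← Nat.cast_add, ← Nat.cast_add]
              norm_cast
              omega
          _ ≤ N (fun i => x (i + k)) + k := add_le_add_left h2 _
      · calc (n : ℕ∞) + 1 = ((n + 1 : ℕ) : ℕ∞) := by push_cast; ring
          _ ≤ (k : ℕ∞) := Nat.cast_le.mpr (by omega)
          _ ≤ N (fun i => x (i + k)) + k := le_add_self
    calc (n : ℕ∞) < (n : ℕ∞) + 1 := by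
          exact (ENat.lt_add_one_iff (by simp)).mpr le_rfl
      _ ≤ Nst N x := h1

lemma Nst_le_iff (x : ℕ → 𝒳) (n : ℕ) :
    Nst N x ≤ n ↔ ∃ k, k ≤ n ∧ N (fun i => x (i + k)) ≤ ((n - k : ℕ) : ℕ∞) := by
  rw [← not_lt, ← cleanTo]
  rw [cleanTo_iff]
  push_neg
  rfl

lemma det_cleanTo (hN : IsSeqStoppingTime N) (n : ℕ) :
    DetBy n (fun x => cleanTo N x n) := by
  intro x y h hc
  rw [cleanTo_iff] at hc ⊢
  intro k hk
  by_contra hc2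
  push_neg at hc2
  have hagree : ∀ i < n - k, (fun i => y (i + k)) i = (fun i => x (i + k)) i := by
    intro i hi
    exact (h (i + k) (by omega)).symm
  have := det_le N hN (n - k) _ _ hagree hc2
  exact absurd (hc k hk) (not_lt.mpr this)

lemma det_Nle (hN : IsSeqStoppingTime N) {n j : ℕ} (hj : j ≤ n) :
    DetBy n (fun x => N x ≤ (j : ℕ∞)) := fun x y h hx =>
  det_le N hN j x y (fun i hi => h i (lt_of_lt_of_le hi hj)) hx

lemma det_Neq (hN : IsSeqStoppingTime N) (m : ℕ) :
    DetBy m (fun x => N x = (m : ℕ∞)) := by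
  intro x y h he
  have h1 : N y ≤ m := det_le N hN m x y h (le_of_eq he)
  refine le_antisymm h1 ?_
  by_contra hc
  push_neg at hc
  have hne : N y ≠ ⊤ := by
    intro ht; rw [ht] at hc; exact absurd hc (by simp)
  lift N y to ℕ using hne with j hj
  have hjm : j < m := by exact_mod_cast hc
  have : N x ≤ j := det_le N hN j y x (fun i hi => (h i (by omega)).symm) (le_of_eq hj.symm)
  rw [he] at this
  exact absurd (le_trans (by exact_mod_cast Nat.cast_le.mpr hjm.le) this) (by
    intro hmj
    have : (m : ℕ∞) ≤ j := this
    have : m ≤ j := by exact_mod_cast this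
    omega)

lemma isStop_Nst (hN : IsSeqStoppingTime N) : IsSeqStoppingTime (Nst N) := by
  intro n
  have hset : {x : ℕ → 𝒳 | Nst N x ≤ n} = ⋃ k ∈ Finset.range (n + 1),
      {x : ℕ → 𝒳 | N (fun i => x (i + k)) ≤ ((n - k : ℕ) : ℕ∞)} := by
    ext x
    simp only [Set.mem_setOf_eq, Set.mem_iUnion, Finset.mem_range, Nat.lt_succ_iff,
      exists_prop]
    exact Nst_le_iff N x n
  rw [hset]
  refine MeasurableSet.biUnion (Finset.range (n + 1)).countable_toSet fun k hk => ?_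
  have hkn : k ≤ n := Nat.lt_succ_iff.mp (Finset.mem_range.mp (Finset.mem_coe.mp hk))
  obtain ⟨S, hS, hEq⟩ := MeasurableSpace.measurableSet_comap.mp (hN (n - k))
  refine MeasurableSpace.measurableSet_comap.mpr
    ⟨(fun v : Fin n → 𝒳 => fun i : Fin (n - k) => v ⟨(i : ℕ) + k, by have := i.isLt; omega⟩) ⁻¹' S,
     (measurable_pi_lambda _ fun i => measurable_pi_apply _) hS, ?_⟩
  ext x
  have hx : (fun i : Fin (n - k) => x ((i : ℕ) + k)) ∈ S ↔ N (fun i => x (i + k)) ≤ ((n - k : ℕ) : ℕ∞) := by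
    have := Set.ext_iff.mp hEq (fun i => x (i + k))
    exact this
  simpa using hx

end Aux3
section Aux4
set_option linter.unusedSectionVars false
variable {𝒳 : Type} [Fintype 𝒳] [Nonempty 𝒳] [MeasurableSpace 𝒳]

lemma meas_cyl {μ : 𝒳 → ℝ} (hμnn : ∀ a, 0 ≤ μ a) (hμ1 : ∑ a, μ a = 1)
    {P : Measure (ℕ → 𝒳)} (hP : IsIIDLaw μ P) {n : ℕ} {p : (ℕ → 𝒳) → Prop}
    (hA : MeasurableSet {x | p x}) (hdet : DetBy n p) :
    P {x | p x} = ENNReal.ofReal (PSum μ n p) := by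
  have hprob : IsProbabilityMeasure P := hP.1
  have hcyl : ∀ w : Fin n → 𝒳,
      P {x | ∀ i : Fin n, x (i : ℕ) = w i} = ENNReal.ofReal (wp μ w) := by
    intro w
    rw [hP.2 n w, wp, ← ENNReal.ofReal_prod_of_nonneg (fun i _ => hμnn _)]
  have hmem : ∀ x : ℕ → 𝒳, p x ↔ p (extw (fun i : Fin n => x i)) := by
    intro x
    constructor
    · exact fun h => hdet x _ (fun i hi => by simp [extw, hi]) h
    · exact fun h => hdet _ x (fun i hi => by simp [extw, hi]) h
  have hle : ∀ q : (ℕ → 𝒳) → Prop,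
      P {x | q (extw (fun i : Fin n => x i))} ≤ ENNReal.ofReal (PSum μ n q) := by
    intro q
    set G := Finset.univ.filter (fun w : Fin n → 𝒳 => q (extw w)) with hG
    have hcover : {x : ℕ → 𝒳 | q (extw (fun i : Fin n => x i))}
        ⊆ ⋃ w ∈ G, {x : ℕ → 𝒳 | ∀ i : Fin n, x (i : ℕ) = w i} := by
      intro x hx
      have hxG : (fun i : Fin n => x i) ∈ G := by
        simp only [hG, Finset.mem_filter, Finset.mem_univ, true_and]
        exact hx
      exact Set.mem_iUnion₂.mpr ⟨_, hxG, fun i => rfl⟩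
    calc P {x | q (extw (fun i : Fin n => x i))}
        ≤ P (⋃ w ∈ G, {x : ℕ → 𝒳 | ∀ i : Fin n, x (i : ℕ) = w i}) := measure_mono hcover
      _ ≤ ∑ w ∈ G, P {x : ℕ → 𝒳 | ∀ i : Fin n, x (i : ℕ) = w i} :=
          measure_biUnion_finset_le _ _
      _ = ∑ w ∈ G, ENNReal.ofReal (wp μ w) := Finset.sum_congr rfl fun w _ => hcyl w
      _ = ENNReal.ofReal (∑ w ∈ G, wp μ w) :=
          (ENNReal.ofReal_sum_of_nonneg fun w _ => wp_nonneg hμnn w).symm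
      _ = ENNReal.ofReal (PSum μ n q) := by rw [PSum, Finset.sum_filter]
  have hAiff : {x : ℕ → 𝒳 | p x} = {x | p (extw (fun i : Fin n => x i))} :=
    Set.ext fun x => hmem x
  have h1 : P {x | p x} ≤ ENNReal.ofReal (PSum μ n p) := by
    rw [hAiff]; exact hle p
  have h2 : P {x | p x}ᶜ ≤ ENNReal.ofReal (PSum μ n (fun x => ¬ p x)) := by
    have hcompl : ({x : ℕ → 𝒳 | p x}ᶜ : Set _)
        = {x | (fun z => ¬ p z) (extw (fun i : Fin n => x i))} := by
      ext x
      simp only [Set.mem_compl_iff, Set.mem_setOf_eq]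
      rw [hmem x]
    rw [hcompl]; exact hle _
  have hsum : PSum μ n p + PSum μ n (fun x => ¬ p x) = 1 := by
    have h := PSum_split_cases μ n (fun _ => True) p
    rw [PSum_true hμ1 n,
      PSum_congr n (p := fun x => True ∧ p x) (q := p) (fun x => by simp),
      PSum_congr n (p := fun x => True ∧ ¬ p x) (q := fun x => ¬ p x) (fun x => by simp)] at h
    exact h.symm
  have hofsum : ENNReal.ofReal (PSum μ n p) + ENNReal.ofReal (PSum μ n (fun x => ¬ p x)) = 1 := by
    rw [← ENNReal.ofReal_add (PSum_nonneg hμnn n p) (PSum_nonneg hμnn n _), hsum,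
      ENNReal.ofReal_one]
  refine le_antisymm h1 ?_
  have hPc : P {x | p x} + P {x | p x}ᶜ = 1 := by
    rw [measure_add_measure_compl hA, measure_univ]
  have hs : ENNReal.ofReal (PSum μ n p)
      = 1 - ENNReal.ofReal (PSum μ n (fun x => ¬ p x)) :=
    ENNReal.eq_sub_of_add_eq ENNReal.ofReal_ne_top hofsum
  have ha : P {x | p x} = 1 - P {x | p x}ᶜ :=
    ENNReal.eq_sub_of_add_eq (measure_ne_top P _) hPc
  rw [hs, ha]
  exact tsub_le_tsub_left h2 1

end Aux4
section Aux5
set_option linter.unusedSectionVars false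
variable {𝒳 : Type} [Fintype 𝒳] [Nonempty 𝒳] [MeasurableSpace 𝒳]

lemma count_le (v : ℕ∞) (K : ℕ) :
    ∑ n ∈ Finset.range K, (if (n : ℕ∞) < v then (1 : ℝ≥0∞) else 0) ≤ (v : ℝ≥0∞) := by
  induction K with
  | zero => simp
  | succ K ih =>
    by_cases h : (K : ℕ∞) < v
    · have hall : ∀ n ∈ Finset.range (K + 1),
          (if (n : ℕ∞) < v then (1 : ℝ≥0∞) else 0) = 1 := by
        intro n hn
        rw [if_pos (lt_of_le_of_lt
          (Nat.cast_le.mpr (Nat.lt_succ_iff.mp (Finset.mem_range.mp hn))) h)]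
      rw [Finset.sum_congr rfl hall, Finset.sum_const, Finset.card_range, nsmul_eq_mul, mul_one]
      have hv : ((K : ℕ∞) + 1) ≤ v := (ENat.add_one_le_iff (by simp)).mpr h
      calc ((K + 1 : ℕ) : ℝ≥0∞) = (((K + 1 : ℕ) : ℕ∞) : ℝ≥0∞) := (ENat.toENNReal_coe _).symm
        _ ≤ (v : ℝ≥0∞) := ENat.toENNReal_le.mpr (by exact_mod_cast hv)
    · rw [Finset.sum_range_succ, if_neg h, add_zero]; exact ih

lemma val_eq_tsum (v : ℕ∞) :
    (v : ℝ≥0∞) = ∑' n : ℕ, (if (n : ℕ∞) < v then (1 : ℝ≥0∞) else 0) := by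
  induction v using ENat.recTopCoe with
  | top =>
    rw [ENat.toENNReal_top]
    have hone : ∀ n : ℕ, (if (n : ℕ∞) < (⊤ : ℕ∞) then (1 : ℝ≥0∞) else 0) = 1 := fun n =>
      if_pos (lt_top_iff_ne_top.mpr (by simp))
    rw [tsum_congr hone]
    exact (ENNReal.tsum_const_eq_top_of_ne_zero one_ne_zero).symm
  | coe j =>
    rw [ENat.toENNReal_coe]
    rw [tsum_eq_sum (s := Finset.range j)
      (fun n hn => if_neg (by
        intro hlt
        exact hn (Finset.mem_range.mpr (by exact_mod_cast hlt))))]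
    have hall : ∀ n ∈ Finset.range j, (if (n : ℕ∞) < (j : ℕ∞) then (1 : ℝ≥0∞) else 0) = 1 := by
      intro n hn
      exact if_pos (by exact_mod_cast Finset.mem_range.mp hn)
    rw [Finset.sum_congr rfl hall, Finset.sum_const, Finset.card_range, nsmul_eq_mul, mul_one]

lemma lint_eq_tsum {P : Measure (ℕ → 𝒳)} (g : (ℕ → 𝒳) → ℕ∞)
    (hg : ∀ n : ℕ, MeasurableSet {x | (n : ℕ∞) < g x}) :
    ∫⁻ x, (g x : ℝ≥0∞) ∂P = ∑' n : ℕ, P {x | (n : ℕ∞) < g x} := by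
  calc ∫⁻ x, (g x : ℝ≥0∞) ∂P
      = ∫⁻ x, ∑' n : ℕ, ({y : ℕ → 𝒳 | (n : ℕ∞) < g y}.indicator (fun _ => (1 : ℝ≥0∞))) x ∂P := by
        refine lintegral_congr fun x => ?_
        rw [val_eq_tsum]
        refine tsum_congr fun n => ?_
        by_cases h : (n : ℕ∞) < g x <;> simp [h, Set.indicator_apply]
    _ = ∑' n : ℕ, ∫⁻ x, ({y : ℕ → 𝒳 | (n : ℕ∞) < g y}.indicator (fun _ => (1 : ℝ≥0∞))) x ∂P :=
        lintegral_tsum fun n => (measurable_const.indicator (hg n)).aemeasurable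
    _ = ∑' n : ℕ, P {y : ℕ → 𝒳 | (n : ℕ∞) < g y} := by
        refine tsum_congr fun n => ?_
        exact lintegral_indicator_one (hg n)

lemma sum_meas_le_lint {P : Measure (ℕ → 𝒳)} (g : (ℕ → 𝒳) → ℕ∞)
    (hg : ∀ n : ℕ, MeasurableSet {x | (n : ℕ∞) < g x}) (K : ℕ) :
    ∑ n ∈ Finset.range K, P {x | (n : ℕ∞) < g x} ≤ ∫⁻ x, (g x : ℝ≥0∞) ∂P := by
  calc ∑ n ∈ Finset.range K, P {x | (n : ℕ∞) < g x}
      = ∑ n ∈ Finset.range K,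
          ∫⁻ x, ({y : ℕ → 𝒳 | (n : ℕ∞) < g y}.indicator (fun _ => (1 : ℝ≥0∞))) x ∂P :=
        Finset.sum_congr rfl fun n _ => (lintegral_indicator_one (hg n)).symm
    _ = ∫⁻ x, ∑ n ∈ Finset.range K,
          ({y : ℕ → 𝒳 | (n : ℕ∞) < g y}.indicator (fun _ => (1 : ℝ≥0∞))) x ∂P :=
        (lintegral_finset_sum _ fun n _ => measurable_const.indicator (hg n)).symm
    _ ≤ ∫⁻ x, (g x : ℝ≥0∞) ∂P := by
        refine lintegral_mono fun x => ?_
        calc ∑ n ∈ Finset.range K,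
            ({y : ℕ → 𝒳 | (n : ℕ∞) < g y}.indicator (fun _ => (1 : ℝ≥0∞))) x
            = ∑ n ∈ Finset.range K, (if (n : ℕ∞) < g x then (1 : ℝ≥0∞) else 0) := by
              refine Finset.sum_congr rfl fun n _ => ?_
              by_cases h : (n : ℕ∞) < g x <;> simp [h, Set.indicator_apply]
          _ ≤ (g x : ℝ≥0∞) := count_le (g x) K

end Aux5
section Aux6

lemma swapSum (g : ℕ → ℕ → ℝ) (M : ℕ) :
    ∑ t ∈ Finset.Icc 1 M, ∑ k ∈ Finset.range t, g k (t - k)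
      = ∑ k ∈ Finset.range M, ∑ m ∈ Finset.Icc 1 (M - k), g k m := by
  induction M with
  | zero => simp
  | succ M ih =>
    have h1 : ∀ k ∈ Finset.range M, ∑ m ∈ Finset.Icc 1 (M + 1 - k), g k m
        = (∑ m ∈ Finset.Icc 1 (M - k), g k m) + g k (M + 1 - k) := by
      intro k hk
      have hk' : k < M := Finset.mem_range.mp hk
      have he : M + 1 - k = (M - k) + 1 := by omega
      rw [he, Finset.sum_Icc_succ_top (by omega : 1 ≤ M - k + 1), ← he]
    have h2 : ∑ m ∈ Finset.Icc 1 (M + 1 - M), g M m = g M (M + 1 - M) := by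
      rw [show M + 1 - M = 1 by omega]
      simp
    have h3 : ∑ k ∈ Finset.range M, ∑ m ∈ Finset.Icc 1 (M + 1 - k), g k m
        = ∑ k ∈ Finset.range M, ((∑ m ∈ Finset.Icc 1 (M - k), g k m) + g k (M + 1 - k)) :=
      Finset.sum_congr rfl h1
    have hR : ∑ k ∈ Finset.range (M + 1), ∑ m ∈ Finset.Icc 1 (M + 1 - k), g k m
        = (∑ k ∈ Finset.range M, ∑ m ∈ Finset.Icc 1 (M - k), g k m)
          + ∑ k ∈ Finset.range (M + 1), g k (M + 1 - k) := by
      rw [Finset.sum_range_succ, h3, Finset.sum_add_distrib, h2, Finset.sum_range_succ]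
      ring
    rw [Finset.sum_Icc_succ_top (by omega : 1 ≤ M + 1), ih, hR]

lemma analysis (C F : ℕ → ℝ) (α : ℝ) (hα0 : 0 < α) (hα1 : α < 1)
    (hC0 : C 0 = 1) (hCnn : ∀ n, 0 ≤ C n) (hC1 : ∀ n, C n ≤ 1) (hFnn : ∀ m, 0 ≤ F m)
    (hDF : ∀ s : ℕ, C s - C (s + 1) ≤ ∑ k ∈ Finset.range (s + 1), C k * F (s + 1 - k))
    (hF : ∀ M : ℕ, ∑ m ∈ Finset.Icc 1 M, F m ≤ α)
    (b : ℝ) (hb : b < 1 / α) : ∃ M : ℕ, b ≤ ∑ n ∈ Finset.range (M + 1), C n := by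
  by_cases hb1 : b ≤ 1
  · exact ⟨0, by simpa [hC0] using hb1⟩
  push_neg at hb1
  have hbpos : 0 < b := lt_trans zero_lt_one hb1
  have hαb : α * b < 1 := by
    rw [lt_div_iff₀ hα0] at hb
    linarith
  set ε : ℝ := (1 - α * b) / b with hε
  have hεpos : 0 < ε := div_pos (by linarith) hbpos
  have hεlt : ε < 1 := by
    rw [hε, div_lt_one hbpos]
    nlinarith
  set x : ℝ := 1 - ε / 2 with hx
  have hx1 : x < 1 := by rw [hx]; linarith
  have hx0 : 0 < x := by rw [hx]; linarith
  have hxpow : ∀ j : ℕ, 0 ≤ x ^ j := fun j => pow_nonneg hx0.le j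
  have hxpow1 : ∀ j : ℕ, x ^ j ≤ 1 := fun j => pow_le_one₀ hx0.le hx1.le
  -- key inequality
  have hkey : ∀ M : ℕ, 1 - x ^ (M + 1)
      ≤ (1 - x + α) * (∑ k ∈ Finset.range (M + 1), C k * x ^ k) := by
    intro M
    set S : ℝ := ∑ k ∈ Finset.range (M + 1), C k * x ^ k with hS
    have hSnn : 0 ≤ S := Finset.sum_nonneg fun k _ => mul_nonneg (hCnn k) (hxpow k)
    -- A := sum over s of (C s - C (s+1)) x^(s+1)
    have hA : ∑ s ∈ Finset.range (M + 1), (C s - C (s + 1)) * x ^ (s + 1)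
        = x * S - ((S + C (M + 1) * x ^ (M + 1)) - 1) := by
      have e1 : ∑ s ∈ Finset.range (M + 1), C s * x ^ (s + 1) = x * S := by
        rw [hS, Finset.mul_sum]
        refine Finset.sum_congr rfl fun s _ => ?_
        ring
      have e2 : ∑ s ∈ Finset.range (M + 1), C (s + 1) * x ^ (s + 1)
          = (S + C (M + 1) * x ^ (M + 1)) - 1 := by
        have := Finset.sum_range_succ' (fun t => C t * x ^ t) (M + 1)
        -- this : ∑ t in range (M+2), C t x^t = ∑ s in range (M+1), C (s+1) x^(s+1) + C 0 x^0
        have e3 : ∑ t ∈ Finset.range (M + 2), C t * x ^ t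
            = S + C (M + 1) * x ^ (M + 1) := by
          rw [Finset.sum_range_succ]
        rw [e3, hC0] at this
        simp at this
        linarith
      calc ∑ s ∈ Finset.range (M + 1), (C s - C (s + 1)) * x ^ (s + 1)
          = ∑ s ∈ Finset.range (M + 1), (C s * x ^ (s + 1) - C (s + 1) * x ^ (s + 1)) := by
            refine Finset.sum_congr rfl fun s _ => ?_; ring
        _ = (∑ s ∈ Finset.range (M + 1), C s * x ^ (s + 1))
            - ∑ s ∈ Finset.range (M + 1), C (s + 1) * x ^ (s + 1) := Finset.sum_sub_distrib _ _
        _ = x * S - ((S + C (M + 1) * x ^ (M + 1)) - 1) := by rw [e1, e2]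
    -- A ≤ B
    have hAB : ∑ s ∈ Finset.range (M + 1), (C s - C (s + 1)) * x ^ (s + 1)
        ≤ ∑ s ∈ Finset.range (M + 1), ∑ k ∈ Finset.range (s + 1),
            (C k * x ^ k) * F (s + 1 - k) := by
      refine Finset.sum_le_sum fun s _ => ?_
      calc (C s - C (s + 1)) * x ^ (s + 1)
          ≤ (∑ k ∈ Finset.range (s + 1), C k * F (s + 1 - k)) * x ^ (s + 1) :=
            mul_le_mul_of_nonneg_right (hDF s) (hxpow (s + 1))
        _ = ∑ k ∈ Finset.range (s + 1), C k * F (s + 1 - k) * x ^ (s + 1) :=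
            Finset.sum_mul _ _ _
        _ ≤ ∑ k ∈ Finset.range (s + 1), (C k * x ^ k) * F (s + 1 - k) := by
            refine Finset.sum_le_sum fun k hk => ?_
            have hks : k < s + 1 := Finset.mem_range.mp hk
            have hxe : x ^ (s + 1) = x ^ k * x ^ (s + 1 - k) := by
              rw [← pow_add]
              congr 1
              omega
            rw [hxe]
            have hA0 : 0 ≤ C k * x ^ k * F (s + 1 - k) :=
              mul_nonneg (mul_nonneg (hCnn k) (hxpow k)) (hFnn _)
            calc C k * F (s + 1 - k) * (x ^ k * x ^ (s + 1 - k))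
                = (C k * x ^ k * F (s + 1 - k)) * x ^ (s + 1 - k) := by ring
              _ ≤ C k * x ^ k * F (s + 1 - k) := mul_le_of_le_one_right hA0 (hxpow1 _)
    -- B rewritten via swap
    have hB : ∑ s ∈ Finset.range (M + 1), ∑ k ∈ Finset.range (s + 1),
          (C k * x ^ k) * F (s + 1 - k)
        ≤ α * S := by
      have hswap := swapSum (fun k m => (C k * x ^ k) * F m) (M + 1)
      have hre : ∑ t ∈ Finset.Icc 1 (M + 1), ∑ k ∈ Finset.range t,
            (C k * x ^ k) * F (t - k)
          = ∑ s ∈ Finset.range (M + 1), ∑ k ∈ Finset.range (s + 1),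
            (C k * x ^ k) * F (s + 1 - k) := by
        rw [← Finset.Ico_add_one_right_eq_Icc, Finset.sum_Ico_eq_sum_range,
          show M + 1 + 1 - 1 = M + 1 by omega]
        refine Finset.sum_congr rfl fun s _ => ?_
        rw [show 1 + s = s + 1 by omega]
      rw [← hre, hswap]
      calc ∑ k ∈ Finset.range (M + 1), ∑ m ∈ Finset.Icc 1 (M + 1 - k), (C k * x ^ k) * F m
          = ∑ k ∈ Finset.range (M + 1), (C k * x ^ k) * ∑ m ∈ Finset.Icc 1 (M + 1 - k), F m := by
            refine Finset.sum_congr rfl fun k _ => ?_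
            rw [Finset.mul_sum]
        _ ≤ ∑ k ∈ Finset.range (M + 1), (C k * x ^ k) * α := by
            refine Finset.sum_le_sum fun k _ => ?_
            exact mul_le_mul_of_nonneg_left (hF _) (mul_nonneg (hCnn k) (hxpow k))
        _ = α * S := by rw [← Finset.sum_mul, hS]; ring
    have hCM : C (M + 1) * x ^ (M + 1) ≤ x ^ (M + 1) := by
      nlinarith [hC1 (M + 1), hCnn (M + 1), hxpow (M + 1)]
    nlinarith [hA, hAB, hB]
  -- choose M
  have htarget : 0 < (1 - α * b) / 2 := by linarith
  obtain ⟨M0, hM0⟩ := exists_pow_lt_of_lt_one htarget hx1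
  refine ⟨M0, ?_⟩
  have hxM : x ^ (M0 + 1) ≤ (1 - α * b) / 2 := by
    calc x ^ (M0 + 1) ≤ x ^ M0 := by
          nlinarith [hxpow M0, hx0, hx1, pow_le_pow_of_le_one hx0.le hx1.le (by omega : M0 ≤ M0 + 1)]
      _ ≤ (1 - α * b) / 2 := hM0.le
  have h1x : 1 - x + α = ε / 2 + α := by rw [hx]; ring
  have hfac : (1 - x + α) * b = (1 + α * b) / 2 := by
    rw [h1x, hε]
    field_simp
    ring
  have hS := hkey M0
  set S : ℝ := ∑ k ∈ Finset.range (M0 + 1), C k * x ^ k with hSdef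
  have hstep : (1 - x + α) * b ≤ (1 - x + α) * S := by
    calc (1 - x + α) * b = (1 + α * b) / 2 := hfac
      _ ≤ 1 - x ^ (M0 + 1) := by linarith
      _ ≤ (1 - x + α) * S := hS
  have hpos : 0 < 1 - x + α := by rw [h1x]; linarith
  have hbS : b ≤ S := le_of_mul_le_mul_left (by linarith [hstep]) hpos
  calc b ≤ S := hbS
    _ ≤ ∑ n ∈ Finset.range (M0 + 1), C n := by
      refine Finset.sum_le_sum fun k _ => ?_
      nlinarith [hCnn k, hxpow1 k, hxpow k, hC1 k]

end Aux6
section Aux65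
set_option linter.unusedSectionVars false
variable {𝒳 : Type} [Fintype 𝒳] [Nonempty 𝒳] [MeasurableSpace 𝒳]

lemma cleanTo_mono (N : (ℕ → 𝒳) → ℕ∞) (x : ℕ → 𝒳) {a b : ℕ} (hab : a ≤ b)
    (h : cleanTo N x b) : cleanTo N x a := by
  rw [cleanTo_iff] at h ⊢
  intro k hk
  exact lt_of_le_of_lt (Nat.cast_le.mpr (by omega)) (h k (by omega))

end Aux65
section Aux66
set_option linter.unusedSectionVars false
variable {𝒳 : Type} [Fintype 𝒳] [Nonempty 𝒳] [MeasurableSpace 𝒳]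

lemma PSum_add_le_or {μ : 𝒳 → ℝ} (hμ : ∀ a, 0 ≤ μ a) (n : ℕ) (p q : (ℕ → 𝒳) → Prop)
    (hdisj : ∀ x, p x → q x → False) :
    PSum μ n p + PSum μ n q ≤ PSum μ n (fun x => p x ∨ q x) := by
  unfold PSum
  rw [← Finset.sum_add_distrib]
  refine Finset.sum_le_sum fun w _ => ?_
  by_cases hp : p (extw w) <;> by_cases hq : q (extw w)
  · exact (hdisj _ hp hq).elim
  all_goals simp [hp, hq]

lemma PSum_Icc_le {μ : 𝒳 → ℝ} (hμ : ∀ a, 0 ≤ μ a) (N : (ℕ → 𝒳) → ℕ∞) (M : ℕ) :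
    ∑ m ∈ Finset.Icc 1 M, PSum μ M (fun x => N x = (m : ℕ∞))
      ≤ PSum μ M (fun x => N x ≤ (M : ℕ∞)) := by
  have key : ∀ s : Finset ℕ, ∑ m ∈ s, PSum μ M (fun x => N x = (m : ℕ∞))
      ≤ PSum μ M (fun x => ∃ m ∈ s, N x = (m : ℕ∞)) := by
    intro s
    induction s using Finset.induction_on with
    | empty => simpa using PSum_nonneg hμ M _
    | @insert a s ha ih =>
      rw [Finset.sum_insert ha]
      refine le_trans (add_le_add_right ih _) ?_
      refine le_trans (PSum_add_le_or hμ M _ _ ?_) (PSum_mono hμ M ?_)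
      · rintro x hxa ⟨m, hm, hxm⟩
        have : (a : ℕ∞) = (m : ℕ∞) := by rw [← hxa, hxm]
        have ham : a = m := by exact_mod_cast this
        exact ha (ham ▸ hm)
      · rintro x (hxa | ⟨m, hm, hxm⟩)
        · exact ⟨a, Finset.mem_insert_self a s, hxa⟩
        · exact ⟨m, Finset.mem_insert_of_mem hm, hxm⟩
  refine le_trans (key _) (PSum_mono hμ M ?_)
  rintro x ⟨m, hm, hxm⟩
  rw [hxm]
  exact Nat.cast_le.mpr (Finset.mem_Icc.mp hm).2

end Aux66
section Aux7
set_option linter.unusedSectionVars false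
variable {𝒳 : Type} [Fintype 𝒳] [Nonempty 𝒳] [MeasurableSpace 𝒳]

lemma meas_lt_N {N : (ℕ → 𝒳) → ℕ∞} (hN : IsSeqStoppingTime N) (n : ℕ) :
    MeasurableSet {x : ℕ → 𝒳 | (n : ℕ∞) < N x} := by
  have : {x : ℕ → 𝒳 | (n : ℕ∞) < N x} = {x : ℕ → 𝒳 | N x ≤ (n : ℕ∞)}ᶜ := by
    ext x; simp [not_le]
  rw [this]
  exact (le_ambient (hN n)).compl

lemma part3 (μ1 : 𝒳 → ℝ) (hμ1 : IsPosPMF μ1) (P1 : Measure (ℕ → 𝒳)) (hP1 : IsIIDLaw μ1 P1)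
    (N : (ℕ → 𝒳) → ℕ∞) (hN : IsSeqStoppingTime N) (P0 : Measure (ℕ → 𝒳)) :
    lordenE1 P0 P1 (Nst N) ≤ lexp P1 N := by
  have hμ1nn : ∀ a, 0 ≤ μ1 a := fun a => (hμ1.1 a).le
  rw [lordenE1]
  refine iSup_le fun m => ?_
  refine essSup_le_of_ae_le _ (Filter.Eventually.of_forall fun x => ?_)
  -- pointwise in x : the inner integral is ≤ lexp P1 N
  have hshift_meas : Measurable (fun y : ℕ → 𝒳 => fun i => y (i + m)) :=
    measurable_pi_lambda _ fun i => measurable_pi_apply _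
  have hg : ∀ n : ℕ, MeasurableSet {y : ℕ → 𝒳 | (n : ℕ∞) < N (fun i => y (i + m))} :=
    fun n => hshift_meas (meas_lt_N hN n)
  calc ∫⁻ y, ((Nst N (fun i => if i < m then x i else y i) : ℝ≥0∞) - (m : ℝ≥0∞)) ∂P1
      ≤ ∫⁻ y, (N (fun i => y (i + m)) : ℝ≥0∞) ∂P1 := by
        refine lintegral_mono fun y => ?_
        rw [tsub_le_iff_right]
        have h1 := Nst_le N (fun i => if i < m then x i else y i) m
        have h2 : (fun i => (if i + m < m then x (i + m) else y (i + m))) =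
            fun i => y (i + m) := funext fun i => if_neg (by omega)
        rw [h2] at h1
        calc (Nst N (fun i => if i < m then x i else y i) : ℝ≥0∞)
            ≤ ((N (fun i => y (i + m)) + (m : ℕ∞) : ℕ∞) : ℝ≥0∞) := ENat.toENNReal_le.mpr h1
          _ = (N (fun i => y (i + m)) : ℝ≥0∞) + (m : ℝ≥0∞) := by
              rw [ENat.toENNReal_add]
              simp
    _ = ∑' n : ℕ, P1 {y : ℕ → 𝒳 | (n : ℕ∞) < N (fun i => y (i + m))} :=
        lint_eq_tsum _ hg
    _ = ∑' n : ℕ, P1 {y : ℕ → 𝒳 | (n : ℕ∞) < N y} := by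
        refine tsum_congr fun n => ?_
        have hdet1 : DetBy (m + n) (fun y : ℕ → 𝒳 => (n : ℕ∞) < N (fun i => y (i + m))) := by
          intro u v h hlt
          by_contra hc
          push_neg at hc
          have : N (fun i => u (i + m)) ≤ (n : ℕ∞) :=
            det_le N hN n _ _ (fun i hi => (h (i + m) (by omega)).symm) hc
          exact absurd hlt (not_lt.mpr this)
        have hdet2 : DetBy n (fun y : ℕ → 𝒳 => (n : ℕ∞) < N y) := by
          intro u v h hlt
          by_contra hc
          push_neg at hc
          have : N u ≤ (n : ℕ∞) := det_le N hN n _ _ (fun i hi => (h i hi).symm) hc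
          exact absurd hlt (not_lt.mpr this)
        rw [meas_cyl hμ1nn hμ1.2 hP1
            (show MeasurableSet {y : ℕ → 𝒳 | (n : ℕ∞) < N (fun i => y (i + m))} from
              hshift_meas (meas_lt_N hN n)) hdet1,
          meas_cyl hμ1nn hμ1.2 hP1 (meas_lt_N hN n) hdet2]
        congr 1
        have hsplit := PSum_split μ1 m n (fun _ => True)
          (fun z => (n : ℕ∞) < N z) (fun u v _ h => h)
        rw [PSum_true hμ1.2 m, one_mul] at hsplit
        calc PSum μ1 (m + n) (fun y => (n : ℕ∞) < N (fun i => y (i + m)))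
            = PSum μ1 (m + n) (fun y => True ∧ (n : ℕ∞) < N (fun i => y (i + m))) :=
              PSum_congr _ fun y => by simp
          _ = PSum μ1 n (fun z => (n : ℕ∞) < N z) := hsplit
    _ = ∫⁻ y, (N y : ℝ≥0∞) ∂P1 := (lint_eq_tsum _ fun n => meas_lt_N hN n).symm
    _ = lexp P1 N := rfl

end Aux7
section Aux8
set_option linter.unusedSectionVars false
variable {𝒳 : Type} [Fintype 𝒳] [Nonempty 𝒳] [MeasurableSpace 𝒳]

lemma part2 (μ0 : 𝒳 → ℝ) (hμ0 : IsPosPMF μ0) (P0 : Measure (ℕ → 𝒳)) (hP0 : IsIIDLaw μ0 P0)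
    (N : (ℕ → 𝒳) → ℕ∞) (hN : IsSeqStoppingTime N) (α : ℝ) (hα0 : 0 < α) (hα1 : α < 1)
    (herr : P0 {x | N x < ⊤} ≤ ENNReal.ofReal α) :
    ENNReal.ofReal (1 / α) ≤ lexp P0 (Nst N) := by
  have hμ0nn : ∀ a, 0 ≤ μ0 a := fun a => (hμ0.1 a).le
  have hμ0sum := hμ0.2
  have hprob0 : IsProbabilityMeasure P0 := hP0.1
  have hNpos : ∀ y : ℕ → 𝒳, ¬ N y ≤ (0 : ℕ∞) := by
    intro y hy
    have hall : ∀ z : ℕ → 𝒳, N z ≤ (0 : ℕ∞) := fun z =>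
      det_le N hN 0 y z (fun i hi => absurd hi (Nat.not_lt_zero i)) hy
    have huniv : {x : ℕ → 𝒳 | N x < ⊤} = Set.univ :=
      Set.eq_univ_of_forall fun z => lt_of_le_of_lt (hall z) (by simp)
    rw [huniv, measure_univ] at herr
    exact absurd (lt_of_le_of_lt herr (ENNReal.ofReal_lt_one.mpr hα1)) (lt_irrefl _)
  set CCr : ℕ → ℝ := fun n => PSum μ0 n (fun x => cleanTo N x n) with hCCr
  set FFr : ℕ → ℝ := fun m => PSum μ0 m (fun x => N x = (m : ℕ∞)) with hFFr
  have hC0 : CCr 0 = 1 := by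
    have hclean0 : ∀ x : ℕ → 𝒳, cleanTo N x 0 := by
      intro x
      rw [cleanTo_iff]
      intro k hk
      have hk0 : k = 0 := by omega
      subst hk0
      simpa using not_le.mp (hNpos (fun i => x (i + 0)))
    calc CCr 0 = PSum μ0 0 (fun _ => True) :=
          PSum_congr 0 (fun x => by simp [hclean0 x])
      _ = 1 := PSum_true hμ0sum 0
  have hCnn : ∀ n, 0 ≤ CCr n := fun n => PSum_nonneg hμ0nn _ _
  have hC1 : ∀ n, CCr n ≤ 1 := fun n => PSum_le_one hμ0nn hμ0sum _ _
  have hFnn : ∀ m, 0 ≤ FFr m := fun m => PSum_nonneg hμ0nn _ _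
  have hDF : ∀ s : ℕ, CCr s - CCr (s + 1)
      ≤ ∑ k ∈ Finset.range (s + 1), CCr k * FFr (s + 1 - k) := by
    intro s
    have c1 : CCr s = PSum μ0 (s + 1) (fun x => cleanTo N x s) :=
      (PSum_marginal μ0 hμ0sum s 1 _ (det_cleanTo N hN s)).symm
    have c2 : ∀ x, cleanTo N x (s + 1) → cleanTo N x s := fun x h =>
      cleanTo_mono N x (by omega) h
    have c3 := PSum_split_cases μ0 (s + 1) (fun x => cleanTo N x s)
      (fun x => cleanTo N x (s + 1))
    have c4 : PSum μ0 (s + 1) (fun x => cleanTo N x s ∧ cleanTo N x (s + 1)) = CCr (s + 1) := by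
      rw [PSum_congr (s + 1) (q := fun x => cleanTo N x (s + 1))
        (fun x => ⟨And.right, fun hb => ⟨c2 x hb, hb⟩⟩)]
    have c5 : ∀ x : ℕ → 𝒳, (cleanTo N x s ∧ ¬ cleanTo N x (s + 1)) →
        ∃ k ∈ Finset.range (s + 1),
          (cleanTo N x k ∧ N (fun i => x (i + k)) = ((s + 1 - k : ℕ) : ℕ∞)) := by
      rintro x ⟨hcs, hns⟩
      have he : ∃ k, k ≤ s + 1 ∧ N (fun i => x (i + k)) ≤ ((s + 1 - k : ℕ) : ℕ∞) :=
        (Nst_le_iff N x (s + 1)).mp (not_lt.mp hns)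
      obtain ⟨hk0le, hk0N⟩ := Nat.find_spec he
      set k0 := Nat.find he with hk0def
      have hk0s : k0 ≤ s := by
        by_contra hgt
        have hk0eq : k0 = s + 1 := by omega
        rw [hk0eq] at hk0N
        simp at hk0N
        exact hNpos _ (le_of_eq hk0N)
      refine ⟨k0, Finset.mem_range.mpr (by omega), ?_, ?_⟩
      · rw [cleanTo_iff]
        intro j hj
        by_contra hc
        push_neg at hc
        rcases Nat.lt_or_ge j k0 with hjlt | hjge
        · exact Nat.find_min he hjlt ⟨by omega, le_trans hc (Nat.cast_le.mpr (by omega))⟩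
        · have hjk : j = k0 := by omega
          subst hjk
          simp at hc
          exact hNpos _ (le_of_eq hc)
      · refine le_antisymm hk0N ?_
        by_contra hc
        push_neg at hc
        have hcast : ((s + 1 - k0 : ℕ) : ℕ∞) = ((s - k0 : ℕ) : ℕ∞) + 1 := by
          rw [show s + 1 - k0 = (s - k0) + 1 by omega]
          push_cast
          ring
        rw [hcast] at hc
        have hle : N (fun i => x (i + k0)) ≤ ((s - k0 : ℕ) : ℕ∞) :=
          (ENat.lt_add_one_iff (by simp)).mp hc
        have hlt := (cleanTo_iff N x s).mp hcs k0 hk0s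
        exact absurd hle (not_le.mpr hlt)
    have c6 : PSum μ0 (s + 1) (fun x => cleanTo N x s ∧ ¬ cleanTo N x (s + 1))
        ≤ ∑ k ∈ Finset.range (s + 1), PSum μ0 (s + 1)
            (fun x => cleanTo N x k ∧ N (fun i => x (i + k)) = ((s + 1 - k : ℕ) : ℕ∞)) :=
      le_trans (PSum_mono hμ0nn _ c5) (PSum_exists_le hμ0nn _ _ _)
    have c7 : ∀ k ∈ Finset.range (s + 1), PSum μ0 (s + 1)
          (fun x => cleanTo N x k ∧ N (fun i => x (i + k)) = ((s + 1 - k : ℕ) : ℕ∞))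
        = CCr k * FFr (s + 1 - k) := by
      intro k hk
      have hsk : s + 1 = k + (s + 1 - k) := by
        have := Finset.mem_range.mp hk; omega
      have htrans : PSum μ0 (s + 1)
            (fun x => cleanTo N x k ∧ N (fun i => x (i + k)) = ((s + 1 - k : ℕ) : ℕ∞))
          = PSum μ0 (k + (s + 1 - k))
            (fun x => cleanTo N x k ∧ N (fun i => x (i + k)) = ((s + 1 - k : ℕ) : ℕ∞)) := by
        rw [← hsk]
      rw [htrans]
      exact PSum_split μ0 k (s + 1 - k) (fun x => cleanTo N x k)
        (fun z => N z = ((s + 1 - k : ℕ) : ℕ∞)) (det_cleanTo N hN k)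
    calc CCr s - CCr (s + 1)
        = PSum μ0 (s + 1) (fun x => cleanTo N x s ∧ ¬ cleanTo N x (s + 1)) := by
          rw [c1, c3, c4]; ring
      _ ≤ ∑ k ∈ Finset.range (s + 1), PSum μ0 (s + 1)
            (fun x => cleanTo N x k ∧ N (fun i => x (i + k)) = ((s + 1 - k : ℕ) : ℕ∞)) := c6
      _ = ∑ k ∈ Finset.range (s + 1), CCr k * FFr (s + 1 - k) := Finset.sum_congr rfl c7
  have hq : ∀ M : ℕ, PSum μ0 M (fun x => N x ≤ (M : ℕ∞)) ≤ α := by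
    intro M
    have hmc := meas_cyl hμ0nn hμ0sum hP0 (le_ambient (hN M)) (det_Nle N hN le_rfl)
    have hsub' : {x : ℕ → 𝒳 | N x ≤ (M : ℕ∞)} ⊆ {x : ℕ → 𝒳 | N x < ⊤} := fun x hx =>
      lt_of_le_of_lt hx (show (M : ℕ∞) < ⊤ from lt_top_iff_ne_top.mpr (by simp))
    have hsub : P0 {x : ℕ → 𝒳 | N x ≤ (M : ℕ∞)} ≤ ENNReal.ofReal α :=
      le_trans (measure_mono hsub') herr
    rw [hmc] at hsub
    exact (ENNReal.ofReal_le_ofReal_iff hα0.le).mp hsub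
  have hF : ∀ M : ℕ, ∑ m ∈ Finset.Icc 1 M, FFr m ≤ α := by
    intro M
    have d2 : ∀ m ∈ Finset.Icc 1 M, FFr m = PSum μ0 M (fun x => N x = (m : ℕ∞)) := by
      intro m hm
      obtain ⟨hm1, hmM⟩ := Finset.mem_Icc.mp hm
      have hsk : M = m + (M - m) := by omega
      have htrans : PSum μ0 M (fun x => N x = (m : ℕ∞))
          = PSum μ0 (m + (M - m)) (fun x => N x = (m : ℕ∞)) := by rw [← hsk]
      rw [htrans]
      exact (PSum_marginal μ0 hμ0sum m (M - m) _ (det_Neq N hN m)).symm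
    rw [Finset.sum_congr rfl d2]
    exact le_trans (PSum_Icc_le hμ0nn N M) (hq M)
  have hmeaslt : ∀ n : ℕ, MeasurableSet {x : ℕ → 𝒳 | (n : ℕ∞) < Nst N x} :=
    fun n => meas_lt_N (isStop_Nst N hN) n
  have hlow : ∀ M : ℕ, ENNReal.ofReal (∑ n ∈ Finset.range (M + 1), CCr n)
      ≤ lexp P0 (Nst N) := by
    intro M
    have heq : ∀ n : ℕ, P0 {x : ℕ → 𝒳 | (n : ℕ∞) < Nst N x} = ENNReal.ofReal (CCr n) :=
      fun n => meas_cyl hμ0nn hμ0sum hP0 (hmeaslt n) (det_cleanTo N hN n)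
    calc ENNReal.ofReal (∑ n ∈ Finset.range (M + 1), CCr n)
        = ∑ n ∈ Finset.range (M + 1), ENNReal.ofReal (CCr n) :=
          ENNReal.ofReal_sum_of_nonneg fun n _ => hCnn n
      _ = ∑ n ∈ Finset.range (M + 1), P0 {x : ℕ → 𝒳 | (n : ℕ∞) < Nst N x} :=
          Finset.sum_congr rfl fun n _ => (heq n).symm
      _ ≤ ∫⁻ x, (Nst N x : ℝ≥0∞) ∂P0 := sum_meas_le_lint (Nst N) hmeaslt (M + 1)
      _ = lexp P0 (Nst N) := rfl
  by_contra hcon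
  push_neg at hcon
  have hne : lexp P0 (Nst N) ≠ ⊤ := by
    intro h
    rw [h] at hcon
    exact absurd hcon (by simp)
  set L := (lexp P0 (Nst N)).toReal with hL
  have hLlt : L < 1 / α := (ENNReal.lt_ofReal_iff_toReal_lt hne).mp hcon
  have hub : ∀ M : ℕ, ∑ n ∈ Finset.range (M + 1), CCr n ≤ L := fun M =>
    (ENNReal.ofReal_le_iff_le_toReal hne).mp (hlow M)
  obtain ⟨M, hM⟩ := analysis CCr FFr α hα0 hα1 hC0 hCnn hC1 hFnn hDF hF
    ((L + 1 / α) / 2) (by linarith)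
  have hcontr : (L + 1 / α) / 2 ≤ L := le_trans hM (hub M)
  linarith

end Aux8
/-- Lorden: if `N` is an extended stopping variable with
`P₀(N < ∞) ≤ α` and `N* = min_k (N_k + k − 1)` where `N_k` applies `N` to
`X_k, X_{k+1}, …`, then `N*` is an extended stopping variable with
`E₀(N*) ≥ 1/α` and `Ē₁(N*) ≤ E₁(N)`. -/
theorem stmt8 {𝒳 : Type} [Fintype 𝒳] [Nonempty 𝒳] [MeasurableSpace 𝒳]
    (μ0 μ1 : 𝒳 → ℝ) (hμ0 : IsPosPMF μ0) (hμ1 : IsPosPMF μ1) (hne : μ0 ≠ μ1)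
    (P0 P1 : Measure (ℕ → 𝒳)) (hP0 : IsIIDLaw μ0 P0) (hP1 : IsIIDLaw μ1 P1)
    (N : (ℕ → 𝒳) → ℕ∞) (hN : IsSeqStoppingTime N)
    (α : ℝ) (hα : α ∈ Set.Ioo (0 : ℝ) 1)
    (herr : P0 {x | N x < ⊤} ≤ ENNReal.ofReal α) :
    IsSeqStoppingTime (fun x => ⨅ k : ℕ, N (fun i => x (i + k)) + (k : ℕ∞)) ∧
      ENNReal.ofReal (1 / α)
        ≤ lexp P0 (fun x => ⨅ k : ℕ, N (fun i => x (i + k)) + (k : ℕ∞)) ∧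
      lordenE1 P0 P1 (fun x => ⨅ k : ℕ, N (fun i => x (i + k)) + (k : ℕ∞))
        ≤ lexp P1 N := by
  refine ⟨isStop_Nst N hN, ?_, ?_⟩
  · exact part2 μ0 hμ0 P0 hP0 N hN α hα.1 hα.2 herr
  · exact part3 μ1 hμ1 P1 hP1 N hN P0

end ChangeDetect
end

section
/- Let ν be a probability mass function on 𝒳 satisfying |ν(a) − μ0(a)| < δ for all a ∈ 𝒳, where 0 < δ < p_min = min_{a∈𝒳} μ0(a) and β = p_min/(p_min − δ); let ε0 ∈ (0,1) bound the probability that the empirical distribution of the first n0 samples deviates from μ0 by at least δ in some coordinate. For γ > 1 and λ > log β, define M(γ) = inf{ n ≥ 1 : max_{1 ≤ k ≤ n} ( −L(Y_k^n) − log ν(Y_k^n) − nλ ) ≥ log γ }, where Y_1, Y_2, … are the observations after the training segment. Then under the no-change hypothesis, E_0(M(γ)) ≥ γ / ( 1/(2^{λ − log β} − 1) + ε0 γ ). -/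
open MeasureTheory Filter
open scoped ENNReal NNReal Topology BigOperators Classical

namespace ChangeDetect

variable {𝒳 : Type} [Fintype 𝒳] [Nonempty 𝒳] [MeasurableSpace 𝒳]

/-! ### Auxiliary machinery for `stmt10` -/

set_option linter.unusedSectionVars false

section Stmt10Aux

variable {𝒳 : Type} [Fintype 𝒳] [Nonempty 𝒳] [MeasurableSpace 𝒳]

/-- extend a word to a sequence by an arbitrary element -/
noncomputable def extArb {d : ℕ} (u : Fin d → 𝒳) : ℕ → 𝒳 :=
  fun i => if h : i < d then u ⟨i, h⟩ else Classical.arbitrary 𝒳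

lemma extArb_lt {d : ℕ} (u : Fin d → 𝒳) {i : ℕ} (h : i < d) : extArb u i = u ⟨i, h⟩ :=
  dif_pos h

/-- i.i.d. weight of a word, in `ℝ≥0∞`. -/
noncomputable def Wd (μ0 : 𝒳 → ℝ) {d : ℕ} (u : Fin d → 𝒳) : ℝ≥0∞ :=
  ∏ i, ENNReal.ofReal (μ0 (u i))

lemma Wd_eq_ofReal (μ0 : 𝒳 → ℝ) (h : ∀ a, 0 ≤ μ0 a) {d : ℕ} (u : Fin d → 𝒳) :
    Wd μ0 u = ENNReal.ofReal (wp μ0 u) := by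
  rw [Wd, wp, ENNReal.ofReal_prod_of_nonneg (fun i _ => h (u i))]

lemma sum_Wd (μ0 : 𝒳 → ℝ) (h0 : ∀ a, 0 ≤ μ0 a) (h1 : ∑ a, μ0 a = 1) (d : ℕ) :
    ∑ u : Fin d → 𝒳, Wd μ0 u = 1 := by
  have h : ∑ u : Fin d → 𝒳, Wd μ0 u
      = ∑ u ∈ Fintype.piFinset (fun _ : Fin d => (Finset.univ : Finset 𝒳)),
          ∏ i, ENNReal.ofReal (μ0 (u i)) := by
    rw [Fintype.piFinset_univ]; rfl
  rw [h, Finset.sum_prod_piFinset (Finset.univ : Finset 𝒳) (fun _ a => ENNReal.ofReal (μ0 a))]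
  have h2 : ∑ a : 𝒳, ENNReal.ofReal (μ0 a) = 1 := by
    rw [← ENNReal.ofReal_sum_of_nonneg (fun a _ => h0 a), h1, ENNReal.ofReal_one]
  simp [h2]

/-- a `d`-local set is a finite union of depth-`d` cylinders -/
lemma setOf_local_eq {d : ℕ} (Q : (ℕ → 𝒳) → Prop)
    (hloc : ∀ x y, (∀ i, i < d → x i = y i) → Q x → Q y) :
    {x : ℕ → 𝒳 | Q x} =
      ⋃ u ∈ Finset.univ.filter (fun u : Fin d → 𝒳 => Q (extArb u)),
        {x : ℕ → 𝒳 | ∀ i : Fin d, x (i : ℕ) = u i} := by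
  ext x
  simp only [Set.mem_setOf_eq, Set.mem_iUnion, Finset.mem_filter, Finset.mem_univ, true_and,
    exists_prop]
  constructor
  · intro hx
    refine ⟨fun i => x (i : ℕ), ?_, fun i => rfl⟩
    exact hloc x _ (fun i hi => (extArb_lt (fun j : Fin d => x (j : ℕ)) hi).symm) hx
  · rintro ⟨u, hQ, hxu⟩
    refine hloc (extArb u) x (fun i hi => ?_) hQ
    rw [extArb_lt u hi, hxu ⟨i, hi⟩]

lemma measure_local_le {μ0 : 𝒳 → ℝ} {P : Measure (ℕ → 𝒳)} (hP : IsIIDLaw μ0 P)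
    {d : ℕ} (Q : (ℕ → 𝒳) → Prop)
    (hloc : ∀ x y, (∀ i, i < d → x i = y i) → Q x → Q y) :
    P {x | Q x} ≤ ∑ u : Fin d → 𝒳, if Q (extArb u) then Wd μ0 u else 0 := by
  rw [setOf_local_eq Q hloc, ← Finset.sum_filter]
  refine le_trans (measure_biUnion_finset_le _ _) ?_
  refine Finset.sum_le_sum (fun u _ => ?_)
  rw [hP.2 d u]; rfl

/-- "sandwich": the measure of a `d`-local set is the sum of the weights of the
participating depth-`d` cylinders. -/
lemma measure_local_eq {μ0 : 𝒳 → ℝ} (h0 : ∀ a, 0 ≤ μ0 a) (h1 : ∑ a, μ0 a = 1)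
    {P : Measure (ℕ → 𝒳)} (hP : IsIIDLaw μ0 P) {d : ℕ} (Q : (ℕ → 𝒳) → Prop)
    (hloc : ∀ x y, (∀ i, i < d → x i = y i) → Q x → Q y) :
    P {x | Q x} = ∑ u : Fin d → 𝒳, if Q (extArb u) then Wd μ0 u else 0 := by
  have hlocn : ∀ x y, (∀ i, i < d → x i = y i) → ¬ Q x → ¬ Q y := by
    intro x y hagree hx hy
    exact hx (hloc y x (fun i hi => (hagree i hi).symm) hy)
  have hQ := measure_local_le hP Q hloc
  have hQn : P {x | ¬ Q x} ≤ ∑ u : Fin d → 𝒳, if ¬ Q (extArb u) then Wd μ0 u else 0 := by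
    refine le_trans (measure_local_le hP (fun x => ¬ Q x) hlocn) (le_of_eq ?_)
    exact Finset.sum_congr rfl fun u _ => by
      rcases Classical.em (Q (extArb u)) with h | h <;> simp [h]
  have hsum : (∑ u : Fin d → 𝒳, if Q (extArb u) then Wd μ0 u else 0)
      + (∑ u : Fin d → 𝒳, if ¬ Q (extArb u) then Wd μ0 u else 0) = 1 := by
    rw [← sum_Wd μ0 h0 h1 d, ← Finset.sum_filter, ← Finset.sum_filter]
    exact Finset.sum_filter_add_sum_filter_not _ _ _
  have hone : (1 : ℝ≥0∞) ≤ P {x | Q x} + P {x | ¬ Q x} := by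
    have hsub : (Set.univ : Set (ℕ → 𝒳)) ⊆ {x | Q x} ∪ {x | ¬ Q x} := by
      intro x _; by_cases h : Q x
      · exact Or.inl h
      · exact Or.inr h
    calc (1 : ℝ≥0∞) = P Set.univ := hP.1.measure_univ.symm
      _ ≤ P ({x | Q x} ∪ {x | ¬ Q x}) := measure_mono hsub
      _ ≤ P {x | Q x} + P {x | ¬ Q x} := measure_union_le _ _
  refine le_antisymm hQ ?_
  have hfin : (∑ u : Fin d → 𝒳, if ¬ Q (extArb u) then Wd μ0 u else 0) ≠ ∞ := by
    intro h
    rw [h] at hsum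
    simp at hsum
  have hmain : (∑ u : Fin d → 𝒳, if Q (extArb u) then Wd μ0 u else 0)
      + (∑ u : Fin d → 𝒳, if ¬ Q (extArb u) then Wd μ0 u else 0)
      ≤ P {x | Q x} + (∑ u : Fin d → 𝒳, if ¬ Q (extArb u) then Wd μ0 u else 0) := by
    rw [hsum]
    exact le_trans hone (add_le_add_right hQn _)
  exact (ENNReal.add_le_add_iff_right hfin).mp hmain

/-- an alarm is raised at time `n` -/
def alarmAt (L : (n : ℕ) → (Fin n → 𝒳) → ℕ) (lam γ : ℝ) (n0 : ℕ) (x : ℕ → 𝒳) (n : ℕ) : Prop :=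
  ∃ k < n, Real.logb 2 γ ≤ cstat L (emp n0 x) lam n0 x k n

/-- no alarm is raised up to (and including) time `k` -/
def noA (L : (n : ℕ) → (Fin n → 𝒳) → ℕ) (lam γ : ℝ) (n0 k : ℕ) (x : ℕ → 𝒳) : Prop :=
  ∀ n, 1 ≤ n → n ≤ k → ¬ alarmAt L lam γ n0 x n

lemma emp_congr {n0 : ℕ} {x y : ℕ → 𝒳} (h : ∀ i, i < n0 → x i = y i) :
    emp n0 x = emp n0 y := by
  funext a
  have hf : (Finset.range n0).filter (fun i => x i = a)
      = (Finset.range n0).filter (fun i => y i = a) :=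
    Finset.filter_congr (fun i hi => by rw [h i (Finset.mem_range.mp hi)])
  rw [emp, emp, hf]

lemma seg_congr {x y : ℕ → 𝒳} {s n : ℕ} (h : ∀ i, i < s + n → x i = y i) :
    seg x s n = seg y s n :=
  funext fun i => h _ (by have := i.isLt; omega)

lemma alarmAt_congr (L : (n : ℕ) → (Fin n → 𝒳) → ℕ) (lam γ : ℝ) (n0 : ℕ)
    {x y : ℕ → 𝒳} {k n : ℕ} (h : ∀ i, i < n0 + k → x i = y i) (hn : n ≤ k) :
    alarmAt L lam γ n0 x n ↔ alarmAt L lam γ n0 y n := by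
  have he : emp n0 x = emp n0 y := emp_congr (fun i hi => h i (by omega))
  unfold alarmAt cstat
  refine exists_congr fun k' => ?_
  refine and_congr_right fun hk' => ?_
  have hseg : seg x (n0 + k') (n - k') = seg y (n0 + k') (n - k') :=
    seg_congr (fun i hi => h i (by omega))
  rw [he, hseg]

lemma noA_congr (L : (n : ℕ) → (Fin n → 𝒳) → ℕ) (lam γ : ℝ) (n0 k : ℕ)
    {x y : ℕ → 𝒳} (h : ∀ i, i < n0 + k → x i = y i) :
    noA L lam γ n0 k x ↔ noA L lam γ n0 k y := by
  unfold noA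
  refine forall_congr' fun n => ?_
  refine imp_congr_right fun _ => imp_congr_right fun hn => ?_
  exact not_congr (alarmAt_congr L lam γ n0 h hn)

lemma Mstop_le_iff (L : (n : ℕ) → (Fin n → 𝒳) → ℕ) (lam γ : ℝ) (n0 : ℕ)
    (x : ℕ → 𝒳) (k : ℕ) :
    Mstop L (emp n0 x) lam γ n0 x ≤ (k : ℕ∞) ↔ ¬ noA L lam γ n0 k x := by
  constructor
  · intro hle hnoA
    have hlb : ((k : ℕ∞) + 1)
        ≤ sInf {m : ℕ∞ | ∃ n : ℕ, m = n ∧ 1 ≤ n ∧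
            ∃ k' < n, Real.logb 2 γ ≤ cstat L (emp n0 x) lam n0 x k' n} := by
      refine le_sInf ?_
      rintro m ⟨n, rfl, h1, halarm⟩
      have hkn : k < n := by
        by_contra hc
        push_neg at hc
        exact hnoA n h1 hc halarm
      have hcast : ((k + 1 : ℕ) : ℕ∞) ≤ (n : ℕ∞) := by exact_mod_cast hkn
      simpa using hcast
    rw [Mstop] at hle
    have h1 : ((k : ℕ∞) + 1) ≤ (k : ℕ∞) := le_trans hlb hle
    have h2 : (k : ℕ∞) < (k : ℕ∞) + 1 := by
      have hcast : ((k : ℕ) : ℕ∞) < ((k + 1 : ℕ) : ℕ∞) := by exact_mod_cast Nat.lt_succ_self k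
      simpa using hcast
    exact absurd h1 (not_le.mpr h2)
  · intro hnoA
    rw [noA] at hnoA
    push_neg at hnoA
    obtain ⟨n, h1, hk, ha⟩ := hnoA
    refine le_trans (sInf_le ⟨n, rfl, h1, ha⟩) ?_
    exact_mod_cast hk

lemma geom_Icc {r : ℝ} (h0 : 0 ≤ r) (h1 : r < 1) (M : ℕ) :
    ∑ m ∈ Finset.Icc 1 M, r ^ m ≤ r / (1 - r) := by
  have hne : (1 : ℝ) - r ≠ 0 := by linarith
  have hfor : ∀ M : ℕ, ∑ m ∈ Finset.Icc 1 M, r ^ m = (r - r ^ (M + 1)) / (1 - r) := by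
    intro M
    induction M with
    | zero => simp
    | succ n ih =>
      rw [Finset.sum_Icc_succ_top (Nat.le_add_left 1 n), ih]
      field_simp
      ring
  rw [hfor M]
  have hnum : r - r ^ (M + 1) ≤ r := by
    have := pow_nonneg h0 (M + 1)
    linarith
  have hden : (0:ℝ) < 1 - r := by linarith
  gcongr

lemma codeBound (L : (n : ℕ) → (Fin n → 𝒳) → ℕ) (hL : Kraft L)
    (μ0 ν : 𝒳 → ℝ) (hμ : ∀ a, 0 ≤ μ0 a) (hν : ∀ a, 0 < ν a)
    (β : ℝ) (hβ0 : 0 < β) (hνβ : ∀ a, μ0 a ≤ β * ν a)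
    (γ lam : ℝ) (hγ : 0 < γ) (m : ℕ) :
    ∑ w : Fin m → 𝒳,
        (if Real.logb 2 γ ≤ -(L m w : ℝ) - Real.logb 2 (wp ν w) - m * lam
          then wp μ0 w else 0)
      ≤ (β * (2 : ℝ) ^ (-lam)) ^ m / γ := by
  have hconst : (0:ℝ) ≤ (β * (2 : ℝ) ^ (-lam)) ^ m / γ := by positivity
  have key : ∀ w : Fin m → 𝒳,
      Real.logb 2 γ ≤ -(L m w : ℝ) - Real.logb 2 (wp ν w) - m * lam →
      wp μ0 w ≤ (β * (2 : ℝ) ^ (-lam)) ^ m / γ * (2 : ℝ) ^ (-(L m w : ℝ)) := by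
    intro w hw
    have hwν : 0 < wp ν w := Finset.prod_pos fun i _ => hν _
    have h2 : γ * wp ν w ≤ (2 : ℝ) ^ (-(L m w : ℝ) - m * lam) := by
      have hlogb : Real.logb 2 (γ * wp ν w) ≤ -(L m w : ℝ) - m * lam := by
        rw [Real.logb_mul (ne_of_gt hγ) (ne_of_gt hwν)]
        linarith
      calc γ * wp ν w = (2:ℝ) ^ Real.logb 2 (γ * wp ν w) :=
            (Real.rpow_logb two_pos (by norm_num) (mul_pos hγ hwν)).symm
        _ ≤ (2:ℝ) ^ (-(L m w : ℝ) - m * lam) :=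
            Real.rpow_le_rpow_of_exponent_le one_le_two hlogb
    have h3 : wp ν w ≤ (2:ℝ) ^ (-(L m w : ℝ)) * (2:ℝ) ^ (-((m:ℝ) * lam)) / γ := by
      rw [← Real.rpow_add two_pos]
      rw [le_div_iff₀ hγ, mul_comm]
      calc γ * wp ν w ≤ (2 : ℝ) ^ (-(L m w : ℝ) - m * lam) := h2
        _ = (2:ℝ) ^ (-(L m w : ℝ) + -((m:ℝ) * lam)) := by ring_nf
    have h4 : wp μ0 w ≤ β ^ m * wp ν w := by
      rw [wp, wp]
      have hb : β ^ m = ∏ _i : Fin m, β := by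
        rw [Finset.prod_const, Finset.card_univ, Fintype.card_fin]
      rw [hb, ← Finset.prod_mul_distrib]
      exact Finset.prod_le_prod (fun i _ => hμ _) (fun i _ => hνβ _)
    have h5 : ((2:ℝ) ^ (-lam)) ^ m = (2:ℝ) ^ (-((m:ℝ) * lam)) := by
      rw [← Real.rpow_natCast ((2:ℝ) ^ (-lam)) m, ← Real.rpow_mul (le_of_lt two_pos)]
      ring_nf
    calc wp μ0 w ≤ β ^ m * wp ν w := h4
      _ ≤ β ^ m * ((2:ℝ) ^ (-(L m w : ℝ)) * (2:ℝ) ^ (-((m:ℝ) * lam)) / γ) :=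
          mul_le_mul_of_nonneg_left h3 (pow_nonneg (le_of_lt hβ0) m)
      _ = (β * (2 : ℝ) ^ (-lam)) ^ m / γ * (2 : ℝ) ^ (-(L m w : ℝ)) := by
          rw [mul_pow, h5]; ring
  calc ∑ w : Fin m → 𝒳,
        (if Real.logb 2 γ ≤ -(L m w : ℝ) - Real.logb 2 (wp ν w) - m * lam
          then wp μ0 w else 0)
      ≤ ∑ w : Fin m → 𝒳, (β * (2 : ℝ) ^ (-lam)) ^ m / γ * (2 : ℝ) ^ (-(L m w : ℝ)) := by
        refine Finset.sum_le_sum fun w _ => ?_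
        split_ifs with h
        · exact key w h
        · positivity
    _ = (β * (2 : ℝ) ^ (-lam)) ^ m / γ * ∑ w : Fin m → 𝒳, (2 : ℝ) ^ (-(L m w : ℝ)) := by
        rw [Finset.mul_sum]
    _ ≤ (β * (2 : ℝ) ^ (-lam)) ^ m / γ * 1 := mul_le_mul_of_nonneg_left (hL m) hconst
    _ = (β * (2 : ℝ) ^ (-lam)) ^ m / γ := mul_one _

lemma extArb_append_lt {a b : ℕ} (v : Fin a → 𝒳) (w : Fin b → 𝒳) {i : ℕ} (h : i < a) :
    extArb (Fin.append v w) i = extArb v i := by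
  have h' : i < a + b := by omega
  rw [extArb_lt _ h', extArb_lt _ h]
  have hc : (⟨i, h'⟩ : Fin (a + b)) = Fin.castAdd b ⟨i, h⟩ := rfl
  rw [hc, Fin.append_left]

lemma seg_extArb_append {a b : ℕ} (v : Fin a → 𝒳) (w : Fin b → 𝒳) :
    seg (extArb (Fin.append v w)) a b = w := by
  funext i
  have h' : a + (i : ℕ) < a + b := by have := i.isLt; omega
  show extArb (Fin.append v w) (a + (i : ℕ)) = w i
  rw [extArb_lt _ h']
  have hc : (⟨a + (i : ℕ), h'⟩ : Fin (a + b)) = Fin.natAdd a i := rfl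
  rw [hc, Fin.append_right]

lemma Wd_append (μ0 : 𝒳 → ℝ) {a b : ℕ} (v : Fin a → 𝒳) (w : Fin b → 𝒳) :
    Wd μ0 (Fin.append v w) = Wd μ0 v * Wd μ0 w := by
  rw [Wd, Wd, Wd, Fin.prod_univ_add]
  congr 1
  · exact Finset.prod_congr rfl fun i _ => by rw [Fin.append_left]
  · exact Finset.prod_congr rfl fun i _ => by rw [Fin.append_right]

lemma sum_append {a b : ℕ} (F : (Fin (a + b) → 𝒳) → ℝ≥0∞) :
    ∑ u : Fin (a + b) → 𝒳, F u
      = ∑ v : Fin a → 𝒳, ∑ w : Fin b → 𝒳, F (Fin.append v w) := by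
  rw [← Equiv.sum_comp (Fin.appendEquiv a b) F, Fintype.sum_prod_type]
  rfl

end Stmt10Aux

/-- mean time to false alarm of the modified CUSUM test that uses the
empirical pre-change distribution:
`E₀(M(γ)) ≥ γ / (1/(2^{λ − log₂ β} − 1) + ε0 γ)`. -/
theorem stmt10 {𝒳 : Type} [Fintype 𝒳] [Nonempty 𝒳] [MeasurableSpace 𝒳]
    (μ0 : 𝒳 → ℝ) (hμ0 : IsPosPMF μ0)
    (L : (n : ℕ) → (Fin n → 𝒳) → ℕ) (hL : Kraft L)
    (pmin δ : ℝ) (hpmin : IsLeast (Set.range μ0) pmin)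
    (hδ0 : 0 < δ) (hδ : δ < pmin)
    (n0 : ℕ) (hn0 : 1 ≤ n0)
    (ε0 : ℝ) (hε0 : ε0 ∈ Set.Ioo (0 : ℝ) 1)
    (γ lam : ℝ) (hγ : 1 < γ) (hlam : Real.logb 2 (pmin / (pmin - δ)) < lam)
    (P : Measure (ℕ → 𝒳)) (hP : IsIIDLaw μ0 P)
    (hdev : P {x | ∃ a, δ ≤ |emp n0 x a - μ0 a|} ≤ ENNReal.ofReal ε0) :
    ENNReal.ofReal
        (γ / (1 / ((2 : ℝ) ^ (lam - Real.logb 2 (pmin / (pmin - δ))) - 1) + ε0 * γ))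
      ≤ lexp P (fun x => Mstop L (emp n0 x) lam γ n0 x) := by
  haveI : IsProbabilityMeasure P := hP.1
  obtain ⟨hε0pos, hε0lt⟩ := hε0
  obtain ⟨hpm_mem, hlb⟩ := hpmin
  have h0 : ∀ a, 0 ≤ μ0 a := fun a => (hμ0.1 a).le
  have h1 : ∑ a, μ0 a = 1 := hμ0.2
  have hpminpos : 0 < pmin := by
    obtain ⟨a0, ha0⟩ := hpm_mem
    rw [← ha0]; exact hμ0.1 a0
  have hpd : 0 < pmin - δ := by linarith
  set β := pmin / (pmin - δ) with hβdef
  have hβ1 : 1 < β := (one_lt_div hpd).mpr (by linarith)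
  have hβ0 : 0 < β := lt_trans one_pos hβ1
  set Λ := Real.logb 2 β with hΛdef
  have hΛpos : 0 < Λ := Real.logb_pos one_lt_two hβ1
  have hlam0 : 0 < lam := lt_trans hΛpos hlam
  set c := lam - Λ with hcdef
  have hcpos : 0 < c := sub_pos.mpr hlam
  have h2c1 : 1 < (2:ℝ) ^ c := by
    calc (1:ℝ) = (2:ℝ) ^ (0:ℝ) := (Real.rpow_zero 2).symm
      _ < (2:ℝ) ^ c := Real.rpow_lt_rpow_of_exponent_lt one_lt_two hcpos
  set K := 1 / ((2:ℝ) ^ c - 1) with hKdef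
  have hKpos : 0 < K := one_div_pos.mpr (by linarith)
  have hγ0 : 0 < γ := lt_trans one_pos hγ
  set r := β * (2:ℝ) ^ (-lam) with hrdef
  have hrr : r = ((2:ℝ) ^ c)⁻¹ := by
    have hβ2 : β = (2:ℝ) ^ Λ := (Real.rpow_logb two_pos (by norm_num) hβ0).symm
    rw [hrdef, hβ2, ← Real.rpow_add two_pos, ← Real.rpow_neg (le_of_lt two_pos)]
    congr 1
    rw [hcdef]; ring
  have hr0 : 0 ≤ r := by rw [hrr]; positivity
  have hr1 : r < 1 := by
    rw [hrr]
    exact inv_lt_one_of_one_lt₀ h2c1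
  have hgeom : ∀ M : ℕ, ∑ m ∈ Finset.Icc 1 M, r ^ m ≤ K := by
    intro M
    refine le_trans (geom_Icc hr0 hr1 M) (le_of_eq ?_)
    rw [hrr, hKdef]
    have h2ne : (2:ℝ) ^ c ≠ 0 := by positivity
    field_simp
  set Good : (ℕ → 𝒳) → Prop := fun x => ∀ a, |emp n0 x a - μ0 a| < δ with hGooddef
  set p : ℕ → ℝ≥0∞ := fun k =>
    ∑ v : Fin (n0 + k) → 𝒳, if noA L lam γ n0 k (extArb v) then Wd μ0 v else 0 with hpdef
  -- locality of ¬ noA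
  have hlocnoA : ∀ k : ℕ, ∀ x y : ℕ → 𝒳, (∀ i, i < n0 + k → x i = y i) →
      ¬ noA L lam γ n0 k x → ¬ noA L lam γ n0 k y :=
    fun k x y hagree hx hy => hx ((noA_congr L lam γ n0 k hagree).mpr hy)
  -- sandwich for the no-alarm events
  have hpk_compl : ∀ k : ℕ, P {x | ¬ noA L lam γ n0 k x} + p k = 1 := by
    intro k
    rw [measure_local_eq h0 h1 hP (fun x => ¬ noA L lam γ n0 k x) (hlocnoA k)]
    rw [hpdef]
    rw [← Finset.sum_add_distrib, ← sum_Wd μ0 h0 h1 (n0 + k)]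
    refine Finset.sum_congr rfl fun v _ => ?_
    by_cases h : noA L lam γ n0 k (extArb v) <;> simp [h]
  -- Step B : partial sums of p bound the expected stopping time from below
  have hlexp : ∀ n : ℕ, ∑ k ∈ Finset.range n, p k
      ≤ lexp P (fun x => Mstop L (emp n0 x) lam γ n0 x) := by
    intro n
    choose U hU₁ hU₂ hU₃ using fun k : ℕ =>
      MeasureTheory.exists_measurable_superset P
        {x | Mstop L (emp n0 x) lam γ n0 x ≤ (k : ℕ∞)}
    have hDk : ∀ k : ℕ, {x | Mstop L (emp n0 x) lam γ n0 x ≤ (k : ℕ∞)}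
        = {x | ¬ noA L lam γ n0 k x} := by
      intro k; ext x; exact Mstop_le_iff L lam γ n0 x k
    have hPV : ∀ k : ℕ, P (U k)ᶜ = p k := by
      intro k
      have hPuniv : P Set.univ = 1 := hP.1.measure_univ
      rw [measure_compl (hU₂ k) (measure_ne_top P _), hPuniv, hU₃ k, hDk k]
      exact ENNReal.sub_eq_of_eq_add (measure_ne_top P _)
        (by rw [← hpk_compl k, add_comm])
    have hmeas : ∀ k ∈ Finset.range n,
        AEMeasurable (fun x => Set.indicator (U k)ᶜ (fun _ => (1:ℝ≥0∞)) x) P :=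
      fun k _ => (measurable_const.indicator (hU₂ k).compl).aemeasurable
    calc ∑ k ∈ Finset.range n, p k
        = ∑ k ∈ Finset.range n, P (U k)ᶜ := by
          exact Finset.sum_congr rfl fun k _ => (hPV k).symm
      _ = ∑ k ∈ Finset.range n, ∫⁻ x, Set.indicator (U k)ᶜ (fun _ => (1:ℝ≥0∞)) x ∂P := by
          refine Finset.sum_congr rfl fun k _ => ?_
          exact (lintegral_indicator_one (hU₂ k).compl).symm
      _ = ∫⁻ x, ∑ k ∈ Finset.range n, Set.indicator (U k)ᶜ (fun _ => (1:ℝ≥0∞)) x ∂P :=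
          (lintegral_finset_sum' _ hmeas).symm
      _ ≤ ∫⁻ x, ((Mstop L (emp n0 x) lam γ n0 x : ℕ∞) : ℝ≥0∞) ∂P := by
          refine lintegral_mono fun x => ?_
          have hind : ∀ k : ℕ, Set.indicator (U k)ᶜ (fun _ => (1:ℝ≥0∞)) x
              ≤ if (k : ℕ∞) < Mstop L (emp n0 x) lam γ n0 x then 1 else 0 := by
            intro k
            by_cases hx : x ∈ (U k)ᶜ
            · rw [Set.indicator_of_mem hx]
              have hnotin : ¬ (Mstop L (emp n0 x) lam γ n0 x ≤ (k : ℕ∞)) :=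
                fun hle => hx (hU₁ k hle)
              rw [if_pos (not_le.mp hnotin)]
            · rw [Set.indicator_of_notMem hx]; exact zero_le
          refine le_trans (Finset.sum_le_sum fun k _ => hind k) ?_
          generalize Mstop L (emp n0 x) lam γ n0 x = M
          cases M with
          | top => simp
          | coe m =>
            have hlt : ∀ k : ℕ, ((k : ℕ∞) < (m : ℕ∞)) ↔ k < m := by
              intro k; exact_mod_cast Iff.rfl
            calc (∑ k ∈ Finset.range n, if (k : ℕ∞) < (m : ℕ∞) then (1:ℝ≥0∞) else 0)
                = ∑ k ∈ Finset.range n, if k < m then (1:ℝ≥0∞) else 0 := by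
                  refine Finset.sum_congr rfl fun k _ => ?_
                  exact if_congr (hlt k) rfl rfl
              _ = ((Finset.range n).filter (fun k => k < m)).card := Finset.sum_boole _ _
              _ ≤ ((m : ℕ) : ℝ≥0∞) := by
                  have hsub : (Finset.range n).filter (fun k => k < m) ⊆ Finset.range m := by
                    intro k hk
                    simp only [Finset.mem_filter] at hk
                    exact Finset.mem_range.mpr hk.2
                  have hcard := Finset.card_le_card hsub
                  rw [Finset.card_range] at hcard
                  exact_mod_cast hcard
              _ = (((m : ℕ) : ℕ∞) : ℝ≥0∞) := by simp
      _ = lexp P (fun x => Mstop L (emp n0 x) lam γ n0 x) := rfl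
  -- Step C : the key per-block bound
  have hEk : ∀ k m : ℕ,
      P {x | noA L lam γ n0 k x ∧ Good x ∧
          Real.logb 2 γ ≤ stat L (emp n0 x) lam (n0 + k) x m}
        ≤ p k * ENNReal.ofReal (r ^ m / γ) := by
    intro k m
    set QE : (ℕ → 𝒳) → Prop := fun x => noA L lam γ n0 k x ∧ Good x ∧
        Real.logb 2 γ ≤ stat L (emp n0 x) lam (n0 + k) x m with hQEdef
    have hlocQE : ∀ x y : ℕ → 𝒳, (∀ i, i < (n0 + k) + m → x i = y i) → QE x → QE y := by
      rintro x y hagree ⟨hnA, hGd, hst⟩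
      have hagree' : ∀ i, i < n0 + k → x i = y i := fun i hi => hagree i (by omega)
      have he : emp n0 x = emp n0 y := emp_congr (fun i hi => hagree i (by omega))
      refine ⟨(noA_congr L lam γ n0 k hagree').mp hnA, ?_, ?_⟩
      · intro a; rw [← he]; exact hGd a
      · have hseg : seg x (n0 + k) m = seg y (n0 + k) m :=
          seg_congr (fun i hi => hagree i (by omega))
        unfold stat at hst ⊢
        rw [← he, ← hseg]
        exact hst
    rw [measure_local_eq h0 h1 hP QE hlocQE, sum_append]
    have hperv : ∀ v : Fin (n0 + k) → 𝒳,
        (∑ w : Fin m → 𝒳, @ite ℝ≥0∞ (QE (extArb (Fin.append v w)))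
            (Classical.propDecidable _) (Wd μ0 (Fin.append v w)) 0)
          ≤ (if noA L lam γ n0 k (extArb v) then Wd μ0 v else 0)
              * ENNReal.ofReal (r ^ m / γ) := by
      intro v
      have hagree : ∀ w : Fin m → 𝒳, ∀ i, i < n0 + k →
          extArb (Fin.append v w) i = extArb v i :=
        fun w i hi => extArb_append_lt v w hi
      have hemp : ∀ w : Fin m → 𝒳,
          emp n0 (extArb (Fin.append v w)) = emp n0 (extArb v) :=
        fun w => emp_congr (fun i hi => hagree w i (by omega))
      by_cases hGN : noA L lam γ n0 k (extArb v) ∧ Good (extArb v)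
      · set ν : 𝒳 → ℝ := emp n0 (extArb v) with hνdef
        have hGd : ∀ a, |emp n0 (extArb v) a - μ0 a| < δ := hGN.2
        have hνfacts : ∀ a, 0 < ν a ∧ μ0 a ≤ β * ν a := by
          intro a
          have habs := abs_lt.mp (hGd a)
          have hμa : pmin ≤ μ0 a := hlb ⟨a, rfl⟩
          have hν1 : μ0 a - δ < ν a := by linarith [habs.1]
          have hνpos : 0 < ν a := by linarith
          refine ⟨hνpos, ?_⟩
          have hA : μ0 a ≤ β * (μ0 a - δ) := by
            rw [hβdef, div_mul_eq_mul_div, le_div_iff₀ hpd]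
            nlinarith
          have hB : β * (μ0 a - δ) ≤ β * ν a :=
            mul_le_mul_of_nonneg_left (le_of_lt hν1) (le_of_lt hβ0)
          linarith
        calc (∑ w : Fin m → 𝒳, @ite ℝ≥0∞ (QE (extArb (Fin.append v w)))
                (Classical.propDecidable _) (Wd μ0 (Fin.append v w)) 0)
            ≤ ∑ w : Fin m → 𝒳, Wd μ0 v *
                (if Real.logb 2 γ ≤ -(L m w : ℝ) - Real.logb 2 (wp ν w) - m * lam
                  then Wd μ0 w else 0) := by
              refine Finset.sum_le_sum fun w _ => ?_
              by_cases hQ : QE (extArb (Fin.append v w))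
              · rw [if_pos hQ]
                have hst := hQ.2.2
                unfold stat at hst
                rw [hemp w, seg_extArb_append v w] at hst
                rw [if_pos hst, Wd_append]
              · rw [if_neg hQ]; exact zero_le
          _ = Wd μ0 v * ∑ w : Fin m → 𝒳,
                (if Real.logb 2 γ ≤ -(L m w : ℝ) - Real.logb 2 (wp ν w) - m * lam
                  then Wd μ0 w else 0) := by rw [← Finset.mul_sum]
          _ ≤ Wd μ0 v * ENNReal.ofReal (r ^ m / γ) := by
              refine mul_le_mul_right ?_ _
              have hsum_eq : (∑ w : Fin m → 𝒳,
                  (if Real.logb 2 γ ≤ -(L m w : ℝ) - Real.logb 2 (wp ν w) - m * lam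
                    then Wd μ0 w else 0))
                  = ENNReal.ofReal (∑ w : Fin m → 𝒳,
                      (if Real.logb 2 γ ≤ -(L m w : ℝ) - Real.logb 2 (wp ν w) - m * lam
                        then wp μ0 w else 0)) := by
                rw [ENNReal.ofReal_sum_of_nonneg]
                · refine Finset.sum_congr rfl fun w _ => ?_
                  split_ifs with h
                  · exact Wd_eq_ofReal μ0 h0 w
                  · simp
                · intro w _
                  split_ifs
                  · exact Finset.prod_nonneg fun i _ => h0 _
                  · exact le_refl 0
              rw [hsum_eq]
              refine ENNReal.ofReal_le_ofReal ?_
              have := codeBound L hL μ0 ν h0 (fun a => (hνfacts a).1) β hβ0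
                (fun a => (hνfacts a).2) γ lam hγ0 m
              rw [hrdef]
              exact this
          _ = (if noA L lam γ n0 k (extArb v) then Wd μ0 v else 0)
              * ENNReal.ofReal (r ^ m / γ) := by rw [if_pos hGN.1]
      · have hQEfalse : ∀ w : Fin m → 𝒳, ¬ QE (extArb (Fin.append v w)) := by
          intro w hQ
          refine hGN ⟨(noA_congr L lam γ n0 k (hagree w)).mp hQ.1, ?_⟩
          intro a
          rw [← hemp w]
          exact hQ.2.1 a
        have hz : (∑ w : Fin m → 𝒳, @ite ℝ≥0∞ (QE (extArb (Fin.append v w)))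
            (Classical.propDecidable _) (Wd μ0 (Fin.append v w)) 0) = 0 :=
          Finset.sum_eq_zero fun w _ => if_neg (hQEfalse w)
        rw [hz]
        exact zero_le
    refine le_trans (Finset.sum_le_sum fun v _ => hperv v) (le_of_eq ?_)
    rw [← Finset.sum_mul]
  -- Step C, assembled: recursion inequality
  set A : ℝ≥0∞ := ENNReal.ofReal (K / γ) with hAdef
  have hstepC : ∀ n : ℕ, (1:ℝ≥0∞)
      ≤ ENNReal.ofReal ε0 + (∑ k ∈ Finset.range n, p k) * A + p n := by
    intro n
    have hincl : {x | ¬ noA L lam γ n0 n x} ⊆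
        {x | ∃ a, δ ≤ |emp n0 x a - μ0 a|} ∪
        ⋃ k ∈ Finset.range n, ⋃ m ∈ Finset.Icc 1 (n - k),
          {x | noA L lam γ n0 k x ∧ Good x ∧
            Real.logb 2 γ ≤ stat L (emp n0 x) lam (n0 + k) x m} := by
      intro x hx
      by_cases hg : Good x
      · right
        have hx' : ∃ n', 1 ≤ n' ∧ n' ≤ n ∧ alarmAt L lam γ n0 x n' := by
          rw [Set.mem_setOf_eq, noA] at hx
          push_neg at hx
          exact hx
        obtain ⟨n', h1', hn', ha'⟩ := hx'
        have hex : ∃ j, 1 ≤ j ∧ alarmAt L lam γ n0 x j := ⟨n', h1', ha'⟩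
        have hjspec := Nat.find_spec hex
        have hjle : Nat.find hex ≤ n' := Nat.find_min' hex ⟨h1', ha'⟩
        set j := Nat.find hex with hjdef
        obtain ⟨k', hk', hcs⟩ := hjspec.2
        have hjn : j ≤ n := le_trans hjle hn'
        refine Set.mem_biUnion (Finset.mem_range.mpr (by omega : k' < n)) ?_
        refine Set.mem_biUnion (Finset.mem_Icc.mpr (by omega : 1 ≤ j - k' ∧ j - k' ≤ n - k')) ?_
        refine ⟨?_, hg, ?_⟩
        · intro nn h1n hlen halarm
          have hnnj : nn < j := by omega
          exact Nat.find_min hex hnnj ⟨h1n, halarm⟩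
        · unfold cstat at hcs
          unfold stat
          have hcast : ((j - k' : ℕ) : ℝ) * lam ≤ (j : ℝ) * lam := by
            refine mul_le_mul_of_nonneg_right ?_ hlam0.le
            exact_mod_cast Nat.sub_le j k'
          linarith
      · left
        have hg' : ¬ ∀ a, |emp n0 x a - μ0 a| < δ := hg
        push_neg at hg'
        exact hg'
    have hPBad : P {x | ∃ a, δ ≤ |emp n0 x a - μ0 a|} ≤ ENNReal.ofReal ε0 := hdev
    have hPD : P {x | ¬ noA L lam γ n0 n x}
        ≤ ENNReal.ofReal ε0 + (∑ k ∈ Finset.range n, p k) * A := by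
      refine le_trans (measure_mono hincl) ?_
      refine le_trans (measure_union_le _ _) ?_
      refine add_le_add hPBad ?_
      refine le_trans (measure_biUnion_finset_le _ _) ?_
      rw [Finset.sum_mul]
      refine Finset.sum_le_sum fun k hk => ?_
      refine le_trans (measure_biUnion_finset_le _ _) ?_
      calc (∑ m ∈ Finset.Icc 1 (n - k),
            P {x | noA L lam γ n0 k x ∧ Good x ∧
              Real.logb 2 γ ≤ stat L (emp n0 x) lam (n0 + k) x m})
          ≤ ∑ m ∈ Finset.Icc 1 (n - k), p k * ENNReal.ofReal (r ^ m / γ) :=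
            Finset.sum_le_sum fun m _ => hEk k m
        _ = p k * ∑ m ∈ Finset.Icc 1 (n - k), ENNReal.ofReal (r ^ m / γ) := by
            rw [← Finset.mul_sum]
        _ ≤ p k * A := by
            refine mul_le_mul_right ?_ _
            rw [← ENNReal.ofReal_sum_of_nonneg (fun m _ => by positivity), hAdef]
            refine ENNReal.ofReal_le_ofReal ?_
            rw [← Finset.sum_div]
            gcongr
            exact hgeom (n - k)
    calc (1:ℝ≥0∞) = P {x | ¬ noA L lam γ n0 n x} + p n := (hpk_compl n).symm
      _ ≤ ENNReal.ofReal ε0 + (∑ k ∈ Finset.range n, p k) * A + p n :=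
          add_le_add_left hPD _
  -- Step D : conclusion
  set S : ℝ≥0∞ := ∑' k, p k with hSdef
  have hS_le : S ≤ lexp P (fun x => Mstop L (emp n0 x) lam γ n0 x) :=
    ENNReal.tsum_le_of_sum_range_le hlexp
  have hp0 : p 0 = 1 := by
    have hall : ∀ v : Fin (n0 + 0) → 𝒳, noA L lam γ n0 0 (extArb v) := by
      intro v nn h1n hlen
      omega
    have heq : p 0 = ∑ v : Fin (n0 + 0) → 𝒳, Wd μ0 v := by
      simp only [hpdef]
      exact Finset.sum_congr rfl fun v _ => if_pos (hall v)
    rw [heq, sum_Wd μ0 h0 h1]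
  have h1S : (1:ℝ≥0∞) ≤ S := by
    rw [← hp0]
    exact ENNReal.le_tsum 0
  rcases eq_or_ne S ∞ with hS | hS
  · calc ENNReal.ofReal (γ / (K + ε0 * γ)) ≤ ⊤ := le_top
      _ = S := hS.symm
      _ ≤ _ := hS_le
  · set s := S.toReal with hsdef
    have hs1 : (1:ℝ) ≤ s := by
      have := ENNReal.toReal_mono hS h1S
      simpa using this
    have hSs : S = ENNReal.ofReal s := (ENNReal.ofReal_toReal hS).symm
    have h1le : (1:ℝ≥0∞) ≤ ENNReal.ofReal ε0 + S * A := by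
      have hp0' : Tendsto p atTop (𝓝 0) := ENNReal.tendsto_atTop_zero_of_tsum_ne_top hS
      have hlim : Tendsto (fun n => ENNReal.ofReal ε0 + S * A + p n) atTop
          (𝓝 (ENNReal.ofReal ε0 + S * A)) := by
        have := Filter.Tendsto.const_add (ENNReal.ofReal ε0 + S * A) hp0'
        simpa using this
      refine ge_of_tendsto' hlim fun n => ?_
      refine le_trans (hstepC n) ?_
      refine add_le_add_left (add_le_add_right ?_ _) _
      exact mul_le_mul_left (ENNReal.sum_le_tsum _) _
    have hreal : (1:ℝ) ≤ ε0 + s * (K / γ) := by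
      have heq : ENNReal.ofReal ε0 + S * A = ENNReal.ofReal (ε0 + s * (K / γ)) := by
        rw [hSs, hAdef, ← ENNReal.ofReal_mul (by linarith : (0:ℝ) ≤ s),
          ← ENNReal.ofReal_add hε0pos.le (by positivity)]
      rw [heq] at h1le
      exact ENNReal.one_le_ofReal.mp h1le
    have hfinal : γ / (K + ε0 * γ) ≤ s := by
      rw [div_le_iff₀ (by positivity)]
      have hKg : (1:ℝ) - ε0 ≤ s * (K / γ) := by linarith
      have hmul : (1 - ε0) * γ ≤ s * K := by
        calc (1 - ε0) * γ ≤ (s * (K / γ)) * γ := mul_le_mul_of_nonneg_right hKg hγ0.le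
          _ = s * K := by field_simp
      have h2 : ε0 * γ ≤ s * (ε0 * γ) := le_mul_of_one_le_left (by positivity) hs1
      nlinarith
    calc ENNReal.ofReal (γ / (K + ε0 * γ)) ≤ ENNReal.ofReal s :=
          ENNReal.ofReal_le_ofReal hfinal
      _ = S := hSs.symm
      _ ≤ _ := hS_le

end ChangeDetect
end

section
/- Let L be a strongly universal prefix code, let μ be a probability mass function on 𝒳 with full support, and let ν be any probability mass function on 𝒳 with full support. If X_1, X_2, … are i.i.d. with distribution μ, then (1/n)( −L(X_1^n) − log ν(X_1^n) ) → D(μ‖ν) almost surely as n → ∞. In particular, the modified CUSUM statistic −L(X_1^n) − log ν(X_1^n) − nλ has asymptotic drift rate D(μ1‖ν) − λ per sample under the post-change source μ1 and drift rate D(μ0‖ν) − λ per sample under the pre-change source μ0. -/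
open MeasureTheory Filter
open scoped ENNReal NNReal Topology BigOperators Classical

namespace ChangeDetect

variable {𝒳 : Type} [Fintype 𝒳] [Nonempty 𝒳] [MeasurableSpace 𝒳]

set_option linter.unusedSectionVars false

lemma wp_pos {p : 𝒳 → ℝ} (hp : ∀ a, 0 < p a) {n : ℕ} (w : Fin n → 𝒳) : 0 < wp p w :=
  Finset.prod_pos fun i _ => hp (w i)

lemma logb_wp {p : 𝒳 → ℝ} (hp : ∀ a, 0 < p a) {n : ℕ} (w : Fin n → 𝒳) :
    Real.logb 2 (wp p w) = ∑ i, Real.logb 2 (p (w i)) :=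
  Real.logb_prod _ _ (fun i _ => (hp (w i)).ne')

/-- Chernoff-style: if `z` has negative mean under `μ`, the probability of
`∑ z(w i) ≥ 0` decays geometrically. -/
lemma tail_bound {μ : 𝒳 → ℝ} (hμ : IsPosPMF μ) (z : 𝒳 → ℝ) (hz : ∑ a, μ a * z a < 0) :
    ∃ ρ : ℝ, 0 ≤ ρ ∧ ρ < 1 ∧ ∀ n : ℕ,
      ∑ w ∈ Finset.univ.filter (fun w : Fin n → 𝒳 => 0 ≤ ∑ i, z (w i)), wp μ w ≤ ρ ^ n := by
  classical
  set g : ℝ → ℝ := fun t => ∑ a, μ a * Real.exp (t * z a) with hg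
  have hg0 : g 0 = 1 := by simp [hg, hμ.2]
  have hder : HasDerivAt g (∑ a, μ a * z a) 0 := by
    have : HasDerivAt g (∑ a, μ a * z a * Real.exp (0 * z a)) 0 := by
      apply HasDerivAt.fun_sum
      intro a _
      have h1 : HasDerivAt (fun t : ℝ => t * z a) (z a) 0 := by
        simpa using (hasDerivAt_id (0:ℝ)).mul_const (z a)
      have := (h1.exp).const_mul (μ a)
      simpa [mul_assoc] using this
    simpa using this
  -- find t > 0 with g t < 1
  obtain ⟨t, ht0, hgt⟩ : ∃ t : ℝ, 0 < t ∧ g t < 1 := by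
    have hslope := hasDerivAt_iff_tendsto_slope.mp hder
    have h2 : Tendsto (slope g 0) (𝓝[>] (0:ℝ)) (𝓝 (∑ a, μ a * z a)) :=
      hslope.mono_left (nhdsWithin_mono _ (fun s hs => ne_of_gt hs))
    have h3 : ∀ᶠ t in 𝓝[>] (0:ℝ), slope g 0 t < 0 :=
      h2.eventually (Filter.Tendsto.eventually_lt_const hz tendsto_id) |>.mono (fun t ht => by
        simpa using ht)
    obtain ⟨t, htpos, hts⟩ := (h3.and self_mem_nhdsWithin).exists
    have ht0 : (0:ℝ) < t := hts
    refine ⟨t, ht0, ?_⟩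
    have hsl : (g t - g 0) / (t - 0) < 0 := by rwa [slope_def_field] at htpos
    rw [hg0] at hsl
    have := div_neg_iff.mp hsl
    rcases this with ⟨h1, h2⟩ | ⟨h1, h2⟩
    · linarith
    · linarith
  refine ⟨g t, ?_, hgt, ?_⟩
  · exact Finset.sum_nonneg fun a _ => mul_nonneg (hμ.1 a).le (Real.exp_pos _).le
  · intro n
    have key : ∀ w : Fin n → 𝒳, wp μ w * Real.exp (t * ∑ i, z (w i))
        = ∏ i, (μ (w i) * Real.exp (t * z (w i))) := by
      intro w
      rw [Finset.mul_sum, Real.exp_sum, wp, ← Finset.prod_mul_distrib]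
    calc ∑ w ∈ Finset.univ.filter (fun w : Fin n → 𝒳 => 0 ≤ ∑ i, z (w i)), wp μ w
        ≤ ∑ w ∈ Finset.univ.filter (fun w : Fin n → 𝒳 => 0 ≤ ∑ i, z (w i)),
            wp μ w * Real.exp (t * ∑ i, z (w i)) := by
          apply Finset.sum_le_sum
          intro w hw
          have hw' : 0 ≤ ∑ i, z (w i) := (Finset.mem_filter.mp hw).2
          nlinarith [wp_pos hμ.1 w, Real.one_le_exp (mul_nonneg ht0.le hw'),
            Real.exp_pos (t * ∑ i, z (w i))]
      _ ≤ ∑ w : Fin n → 𝒳, wp μ w * Real.exp (t * ∑ i, z (w i)) := by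
          apply Finset.sum_le_sum_of_subset_of_nonneg (Finset.filter_subset _ _)
          intro w _ _
          exact mul_nonneg (wp_pos hμ.1 w).le (Real.exp_pos _).le
      _ = (g t) ^ n := by
          simp_rw [key]
          rw [hg, Fintype.sum_pow (fun a => μ a * Real.exp (t * z a)) n]

/-- Borel–Cantelli for geometrically small bad word-sets. -/
lemma bc {μ : 𝒳 → ℝ} (hμ : ∀ a, 0 ≤ μ a) {P : Measure (ℕ → 𝒳)} (hP : IsIIDLaw μ P)
    (Bad : (n : ℕ) → Finset (Fin n → 𝒳)) {ρ : ℝ} (hρ0 : 0 ≤ ρ) (hρ1 : ρ < 1)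
    (hb : ∀ n, ∑ w ∈ Bad n, wp μ w ≤ ρ ^ n) :
    ∀ᵐ x ∂P, ∀ᶠ n in atTop, seg x 0 n ∉ Bad n := by
  have hPm : ∀ n, P {x : ℕ → 𝒳 | seg x 0 n ∈ Bad n} ≤ ENNReal.ofReal (ρ ^ n) := by
    intro n
    have hsub : {x : ℕ → 𝒳 | seg x 0 n ∈ Bad n}
        ⊆ ⋃ w ∈ Bad n, {x : ℕ → 𝒳 | ∀ i : Fin n, x (i : ℕ) = w i} := by
      intro x hx
      exact Set.mem_biUnion hx (fun i => by simp [seg] at *)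
    calc P {x : ℕ → 𝒳 | seg x 0 n ∈ Bad n}
        ≤ ∑ w ∈ Bad n, P {x : ℕ → 𝒳 | ∀ i : Fin n, x (i : ℕ) = w i} :=
          le_trans (measure_mono hsub) (measure_biUnion_finset_le _ _)
      _ = ∑ w ∈ Bad n, ENNReal.ofReal (wp μ w) := by
          refine Finset.sum_congr rfl fun w _ => ?_
          rw [hP.2 n w, wp, ← ENNReal.ofReal_prod_of_nonneg]
          intro i _; exact hμ (w i)
      _ = ENNReal.ofReal (∑ w ∈ Bad n, wp μ w) := by
          rw [ENNReal.ofReal_sum_of_nonneg]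
          intro w _; exact Finset.prod_nonneg fun i _ => hμ (w i)
      _ ≤ ENNReal.ofReal (ρ ^ n) := ENNReal.ofReal_le_ofReal (hb n)
  have htsum : (∑' n, P {x : ℕ → 𝒳 | seg x 0 n ∈ Bad n}) ≠ ⊤ := by
    refine ne_top_of_le_ne_top ?_ (ENNReal.tsum_le_tsum hPm)
    have : ∀ n, ENNReal.ofReal (ρ ^ n) = (ENNReal.ofReal ρ) ^ n := fun n =>
      ENNReal.ofReal_pow hρ0 n
    simp_rw [this, ENNReal.tsum_geometric]
    rw [Ne, ENNReal.inv_eq_top, tsub_eq_zero_iff_le]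
    exact fun h => absurd (lt_of_lt_of_le (ENNReal.ofReal_lt_one.2 hρ1) h) (lt_irrefl _)
  filter_upwards [MeasureTheory.ae_eventually_notMem htsum] with x hx
  exact hx


/-- for a strongly universal prefix code `L` and i.i.d. samples from
`μ`, `(1/n)(−L(X_1^n) − log₂ ν(X_1^n)) → D(μ‖ν)` a.s.; in particular the modified
CUSUM statistic `−L(X_1^n) − log₂ ν(X_1^n) − nλ` has asymptotic drift rate
`D(μ‖ν) − λ` per sample (applied with `μ = μ1` after the change and `μ = μ0`
before the change). -/
theorem stmt15 {𝒳 : Type} [Fintype 𝒳] [Nonempty 𝒳] [MeasurableSpace 𝒳]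
    (μ ν : 𝒳 → ℝ) (hμ : IsPosPMF μ) (hν : IsPosPMF ν)
    (L : (n : ℕ) → (Fin n → 𝒳) → ℕ) (hL : Kraft L) (hU : StronglyUniversal L)
    (P : Measure (ℕ → 𝒳)) (hP : IsIIDLaw μ P) (lam : ℝ) :
    (∀ᵐ x ∂P, Tendsto (fun n : ℕ =>
        (-(L n (seg x 0 n) : ℝ) - Real.logb 2 (wp ν (seg x 0 n))) / n)
      atTop (𝓝 (D μ ν))) ∧
    (∀ᵐ x ∂P, Tendsto (fun n : ℕ => stat L ν lam 0 x n / n)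
      atTop (𝓝 (D μ ν - lam))) := by
  classical
  obtain ⟨R, hR, hRb⟩ := hU
  set y : 𝒳 → ℝ := fun a => Real.logb 2 (μ a / ν a) with hy
  have hDy : D μ ν = ∑ a, μ a * y a := rfl
  -- three families of bad events, indexed by k
  have hmainAE : ∀ᵐ x ∂P, ∀ k : ℕ,
      (∀ᶠ n in atTop, -(L n (seg x 0 n) : ℝ) - Real.logb 2 (wp μ (seg x 0 n))
          < (1 / ((k:ℝ) + 1)) * n) ∧
      (∀ᶠ n in atTop, ∑ i, y (seg x 0 n i) < n * (D μ ν + 1 / ((k:ℝ) + 1))) ∧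
      (∀ᶠ n in atTop, n * (D μ ν - 1 / ((k:ℝ) + 1)) < ∑ i, y (seg x 0 n i)) := by
    rw [ae_all_iff]
    intro k
    set ε : ℝ := 1 / ((k:ℝ) + 1) with hε
    have hε0 : 0 < ε := by positivity
    -- (1) code redundancy bad events
    have hA : ∀ᵐ x ∂P, ∀ᶠ n in atTop,
        -(L n (seg x 0 n) : ℝ) - Real.logb 2 (wp μ (seg x 0 n)) < ε * n := by
      have hρ0 : (0:ℝ) ≤ (2:ℝ) ^ (-ε) := (Real.rpow_pos_of_pos two_pos _).le
      have hρ1 : (2:ℝ) ^ (-ε) < 1 :=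
        Real.rpow_lt_one_of_one_lt_of_neg one_lt_two (neg_neg_iff_pos.2 hε0)
      have hb : ∀ n : ℕ, ∑ w ∈ Finset.univ.filter
          (fun w : Fin n → 𝒳 => ε * n ≤ -(L n w : ℝ) - Real.logb 2 (wp μ w)), wp μ w
          ≤ ((2:ℝ) ^ (-ε)) ^ n := by
        intro n
        have step : ∀ w ∈ Finset.univ.filter
            (fun w : Fin n → 𝒳 => ε * n ≤ -(L n w : ℝ) - Real.logb 2 (wp μ w)),
            wp μ w ≤ (2:ℝ) ^ (-(ε * n)) * (2:ℝ) ^ (-(L n w : ℝ)) := by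
          intro w hw
          have hw' := (Finset.mem_filter.mp hw).2
          have hlb : Real.logb 2 (wp μ w) ≤ -(ε * n) - (L n w : ℝ) := by linarith
          have : wp μ w = (2:ℝ) ^ Real.logb 2 (wp μ w) :=
            (Real.rpow_logb two_pos (by norm_num) (wp_pos hμ.1 w)).symm
          rw [this, ← Real.rpow_add two_pos]
          exact Real.rpow_le_rpow_left_iff one_lt_two |>.2 hlb
        calc ∑ w ∈ Finset.univ.filter
              (fun w : Fin n → 𝒳 => ε * n ≤ -(L n w : ℝ) - Real.logb 2 (wp μ w)), wp μ w
            ≤ ∑ w ∈ Finset.univ.filter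
              (fun w : Fin n → 𝒳 => ε * n ≤ -(L n w : ℝ) - Real.logb 2 (wp μ w)),
                (2:ℝ) ^ (-(ε * n)) * (2:ℝ) ^ (-(L n w : ℝ)) := Finset.sum_le_sum step
          _ ≤ ∑ w : Fin n → 𝒳, (2:ℝ) ^ (-(ε * n)) * (2:ℝ) ^ (-(L n w : ℝ)) := by
              apply Finset.sum_le_sum_of_subset_of_nonneg (Finset.filter_subset _ _)
              intro w _ _; positivity
          _ = (2:ℝ) ^ (-(ε * n)) * ∑ w : Fin n → 𝒳, (2:ℝ) ^ (-(L n w : ℝ)) := by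
              rw [Finset.mul_sum]
          _ ≤ (2:ℝ) ^ (-(ε * n)) * 1 := by
              have := hL n
              have h2 : (0:ℝ) ≤ (2:ℝ) ^ (-(ε * n)) := (Real.rpow_pos_of_pos two_pos _).le
              exact mul_le_mul_of_nonneg_left this h2
          _ = ((2:ℝ) ^ (-ε)) ^ n := by
              rw [mul_one, show -(ε * n) = (-ε) * (n:ℝ) by ring,
                Real.rpow_mul two_pos.le, Real.rpow_natCast]
      filter_upwards [bc (fun a => (hμ.1 a).le) hP _ hρ0 hρ1 hb] with x hx
      filter_upwards [hx] with n hn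
      simpa using hn
    -- (2) upper tail for the log-likelihood-ratio sum
    have hSp : ∀ᵐ x ∂P, ∀ᶠ n in atTop,
        ∑ i, y (seg x 0 n i) < n * (D μ ν + ε) := by
      have hz : ∑ a, μ a * (y a - (D μ ν + ε)) < 0 := by
        have : ∑ a, μ a * (y a - (D μ ν + ε))
            = ∑ a, μ a * y a - (∑ a, μ a) * (D μ ν + ε) := by
          rw [Finset.sum_mul]
          rw [← Finset.sum_sub_distrib]
          exact Finset.sum_congr rfl fun a _ => by ring
        rw [this, hμ.2, ← hDy]
        linarith
      obtain ⟨ρ, hρ0, hρ1, hb⟩ := tail_bound hμ (fun a => y a - (D μ ν + ε)) hz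
      filter_upwards [bc (fun a => (hμ.1 a).le) hP _ hρ0 hρ1 hb] with x hx
      filter_upwards [hx] with n hn
      simp only [Finset.mem_filter, Finset.mem_univ, true_and, not_le] at hn
      have : ∑ i : Fin n, (y (seg x 0 n i) - (D μ ν + ε))
          = (∑ i, y (seg x 0 n i)) - n * (D μ ν + ε) := by
        rw [Finset.sum_sub_distrib, Finset.sum_const, Finset.card_univ, Fintype.card_fin]
        ring_nf
      rw [this] at hn
      linarith
    -- (3) lower tail
    have hSm : ∀ᵐ x ∂P, ∀ᶠ n in atTop,
        n * (D μ ν - ε) < ∑ i, y (seg x 0 n i) := by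
      have hz : ∑ a, μ a * ((D μ ν - ε) - y a) < 0 := by
        have : ∑ a, μ a * ((D μ ν - ε) - y a)
            = (∑ a, μ a) * (D μ ν - ε) - ∑ a, μ a * y a := by
          rw [Finset.sum_mul, ← Finset.sum_sub_distrib]
          exact Finset.sum_congr rfl fun a _ => by ring
        rw [this, hμ.2, ← hDy]
        linarith
      obtain ⟨ρ, hρ0, hρ1, hb⟩ := tail_bound hμ (fun a => (D μ ν - ε) - y a) hz
      filter_upwards [bc (fun a => (hμ.1 a).le) hP _ hρ0 hρ1 hb] with x hx
      filter_upwards [hx] with n hn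
      simp only [Finset.mem_filter, Finset.mem_univ, true_and, not_le] at hn
      have : ∑ i : Fin n, ((D μ ν - ε) - y (seg x 0 n i))
          = n * (D μ ν - ε) - ∑ i, y (seg x 0 n i) := by
        rw [Finset.sum_sub_distrib, Finset.sum_const, Finset.card_univ, Fintype.card_fin]
        ring_nf
      rw [this] at hn
      linarith
    filter_upwards [hA, hSp, hSm] with x h1 h2 h3
    exact ⟨h1, h2, h3⟩
  -- the main a.e. convergence
  have main : ∀ᵐ x ∂P, Tendsto (fun n : ℕ =>
      (-(L n (seg x 0 n) : ℝ) - Real.logb 2 (wp ν (seg x 0 n))) / n)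
      atTop (𝓝 (D μ ν)) := by
    filter_upwards [hmainAE] with x hx
    -- decomposition of the statistic
    have hdecomp : ∀ n : ℕ,
        -(L n (seg x 0 n) : ℝ) - Real.logb 2 (wp ν (seg x 0 n))
        = (-(L n (seg x 0 n) : ℝ) - Real.logb 2 (wp μ (seg x 0 n)))
          + ∑ i, y (seg x 0 n i) := by
      intro n
      have h1 : Real.logb 2 (wp μ (seg x 0 n)) - Real.logb 2 (wp ν (seg x 0 n))
          = ∑ i, y (seg x 0 n i) := by
        rw [logb_wp hμ.1, logb_wp hν.1, ← Finset.sum_sub_distrib]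
        refine Finset.sum_congr rfl fun i _ => ?_
        rw [hy]
        exact (Real.logb_div (hμ.1 _).ne' (hν.1 _).ne').symm
      linarith [h1]
    rw [Metric.tendsto_atTop]
    intro δ hδ
    obtain ⟨k, hk⟩ := exists_nat_one_div_lt (show (0:ℝ) < δ/4 by linarith)
    obtain ⟨h1, h2, h3⟩ := hx k
    obtain ⟨N1, hN1⟩ := eventually_atTop.mp h1
    obtain ⟨N2, hN2⟩ := eventually_atTop.mp h2
    obtain ⟨N3, hN3⟩ := eventually_atTop.mp h3
    obtain ⟨N4, hN4⟩ := eventually_atTop.mp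
      (hR.eventually (eventually_abs_sub_lt 0 (show (0:ℝ) < δ/4 by linarith)))
    refine ⟨max (max N1 N2) (max (max N3 N4) 1), fun n hn => ?_⟩
    obtain ⟨hn1, hn2, hn3, hn4, hn5⟩ : N1 ≤ n ∧ N2 ≤ n ∧ N3 ≤ n ∧ N4 ≤ n ∧ 1 ≤ n := by
      simp only [ge_iff_le, max_le_iff] at hn
      omega
    have hnpos : (0:ℝ) < n := by exact_mod_cast hn5
    set A : ℝ := -(L n (seg x 0 n) : ℝ) - Real.logb 2 (wp μ (seg x 0 n)) with hA
    set S : ℝ := ∑ i, y (seg x 0 n i) with hS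
    have hAub : A < (1 / ((k:ℝ) + 1)) * n := hN1 n hn1
    have hAlb : -(R n) ≤ A := by
      have := hRb n μ hμ (seg x 0 n)
      rw [hA]; linarith
    have hRn : |R n / n - 0| < δ/4 := hN4 n hn4
    rw [sub_zero, abs_div, abs_of_pos hnpos] at hRn
    have hRn' : -(δ/4) * n < -(R n) := by
      have h := (div_lt_iff₀ hnpos).mp hRn
      have : -|R n| ≤ -(R n) := neg_le_neg (le_abs_self _)
      nlinarith [neg_abs_le (R n)]
    have hSub : S < n * (D μ ν + 1 / ((k:ℝ) + 1)) := hN2 n hn2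
    have hSlb : n * (D μ ν - 1 / ((k:ℝ) + 1)) < S := hN3 n hn3
    have hkd : 1 / ((k:ℝ) + 1) < δ/4 := hk
    have hgoal : ((A + S) / (n:ℝ) - D μ ν) = (A + S - n * D μ ν) / n := by
      field_simp
    rw [Real.dist_eq, hdecomp n, ← hA, ← hS, hgoal, abs_div, abs_of_pos hnpos,
      div_lt_iff₀ hnpos, abs_lt]
    have hx1 : (1 / ((k:ℝ) + 1)) * n < (δ/4) * n :=
      mul_lt_mul_of_pos_right hkd hnpos
    constructor
    · nlinarith
    · nlinarith
  refine ⟨main, ?_⟩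
  filter_upwards [main] with x hx
  have h1 : Tendsto (fun n : ℕ =>
      (-(L n (seg x 0 n) : ℝ) - Real.logb 2 (wp ν (seg x 0 n))) / n - lam)
      atTop (𝓝 (D μ ν - lam)) := hx.sub_const lam
  refine h1.congr' ?_
  filter_upwards [eventually_ge_atTop 1] with n hn
  have hnpos : (0:ℝ) < n := by exact_mod_cast hn
  rw [stat]
  field_simp

end ChangeDetect
end
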